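/- arXiv:1207.2408 — 4 statements merged into one kernel-verified Lean document; each statement's English description precedes it below -/
import Mathlib

section
/- Let N ≥ 2, let Ω be a convex bounded domain in ℝ^d, and let u_1,…,u_{N−1} be bounded vector fields from Ω to ℝ^d whose (N−1)-tuple (u_1,…,u_{N−1}) is jointly N-monotone. Then there exists a function H : Ω^N → ℝ such that: (i) H is N-sub-antisymmetric; (ii) H(x,x,…,x) = 0 for every x ∈ Ω; (iii) for each fixed (x_2,…,x_N) ∈ Ω^{N−1}, the map x_1 ↦ H(x_1,x_2,…,x_N) is concave on Ω; (iv) for each fixed x_1 ∈ Ω, the map (x_2,…,x_N) ↦ H(x_1,x_2,…,x_N) is jointly convex on Ω^{N−1}; and (v) for every x ∈ Ω and every (y_1,…,y_{N−1}) ∈ Ω^{N−1}, H(x,y_1,…,y_{N−1}) ≥ ∑_{ℓ=1}^{N−1} ⟨u_ℓ(x), y_ℓ − x⟩, i.e. (u_1(x),…,u_{N−1}(x)) is a subgradient at (x,…,x) of the convex function (y_1,…,y_{N−1}) ↦ H(x,y_1,…,y_{N−1}). -/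
open MeasureTheory Finset
open scoped BigOperators RealInnerProductSpace

noncomputable section

/-- `ℝ^d` as a Euclidean space. -/
abbrev Ed (d : ℕ) := EuclideanSpace ℝ (Fin d)

/-- The cyclic permutation `σ(x₁,…,x_N) = (x₂,…,x_N,x₁)` acting on tuples. -/
def cyc {N : ℕ} {α : Type*} (x : Fin N → α) : Fin N → α := x ∘ finRotate N

/-- The `(N-1)`-tuple `(u 1, …, u (N-1))` is jointly `N`-monotone on `Ω`:
for every cycle `x 1, …, x (2N-1)` of points of `Ω` with `x (N+i) = x i` for
`1 ≤ i ≤ N-1`, one has `∑_{i=1}^{N} ∑_{ℓ=1}^{N-1} ⟨u ℓ (x i), x i - x (i+ℓ)⟩ ≥ 0`. -/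
def JointlyNMonotone (N : ℕ) {d : ℕ} (Ω : Set (Ed d)) (u : ℕ → Ed d → Ed d) : Prop :=
  ∀ x : ℕ → Ed d,
    (∀ i, 1 ≤ i → i ≤ 2 * N - 1 → x i ∈ Ω) →
    (∀ i, 1 ≤ i → i ≤ N - 1 → x (N + i) = x i) →
    0 ≤ ∑ i ∈ Icc 1 N, ∑ ℓ ∈ Icc 1 (N - 1), ⟪u ℓ (x i), x i - x (i + ℓ)⟫

/-- `H` is `N`-sub-antisymmetric on `Ω^N` : `∑_{i=0}^{N-1} H(σ^i x) ≤ 0` on `Ω^N`. -/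
def NSubAntisymmetric (N : ℕ) {d : ℕ} (Ω : Set (Ed d)) (H : (Fin N → Ed d) → ℝ) : Prop :=
  ∀ x : Fin N → Ed d, (∀ i, x i ∈ Ω) → ∑ i ∈ range N, H (cyc^[i] x) ≤ 0

open Fin.NatCast

namespace S0

variable {d N : ℕ}

/-- The elementary cost `c(x) = ∑_ℓ ⟨u_ℓ(x₀), x_ℓ - x₀⟩`. -/
def cost [NeZero N] (u : ℕ → Ed d → Ed d) (x : Fin N → Ed d) : ℝ :=
  ∑ ℓ ∈ Icc 1 (N - 1), ⟪u ℓ (x 0), x ((ℓ : ℕ) : Fin N) - x 0⟫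

/-- Values of convex combinations of costs over decompositions of `x 0`. -/
def SS [NeZero N] (Ω : Set (Ed d)) (u : ℕ → Ed d → Ed d) (x : Fin N → Ed d) : Set ℝ :=
  { r | ∃ (m : ℕ) (lam : Fin m → ℝ) (z : Fin m → Ed d),
      (∀ j, 0 ≤ lam j) ∧ (∑ j, lam j) = 1 ∧ (∀ j, z j ∈ Ω) ∧
      (∑ j, lam j • z j) = x 0 ∧
      r = ∑ j, lam j * cost u (Function.update x 0 (z j)) }

def HH [NeZero N] (Ω : Set (Ed d)) (u : ℕ → Ed d → Ed d) (x : Fin N → Ed d) : ℝ :=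
  sSup (SS Ω u x)

lemma cast_ne_zero [NeZero N] {ℓ : ℕ} (h1 : 1 ≤ ℓ) (h2 : ℓ ≤ N - 1) :
    ((ℓ : ℕ) : Fin N) ≠ 0 := by
  have hN : 0 < N := Nat.pos_of_ne_zero (NeZero.ne N)
  have hℓ : ℓ < N := by omega
  intro h
  have := congrArg Fin.val h
  rw [Fin.val_natCast, Nat.mod_eq_of_lt hℓ] at this
  simp at this
  omega

lemma cost_update [NeZero N] (u : ℕ → Ed d → Ed d) (x : Fin N → Ed d) (w : Ed d) :
    cost u (Function.update x 0 w)
      = ∑ ℓ ∈ Icc 1 (N - 1), ⟪u ℓ w, x ((ℓ : ℕ) : Fin N) - w⟫ := by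
  unfold cost
  rw [Function.update_self]
  refine Finset.sum_congr rfl fun ℓ hℓ => ?_
  rw [Function.update_of_ne (cast_ne_zero (mem_Icc.1 hℓ).1 (mem_Icc.1 hℓ).2)]

section Marginal

variable {ι : Type*} [Fintype ι] [DecidableEq ι] {m : ι → ℕ}

lemma prod_split {p q : ι} (hpq : p ≠ q) (f : ι → ℝ) :
    ∏ i, f i = f p * (f q * ∏ i ∈ (univ.erase p).erase q, f i) := by
  rw [← Finset.mul_prod_erase univ f (mem_univ p),
      ← Finset.mul_prod_erase (univ.erase p) f
        (Finset.mem_erase.2 ⟨hpq.symm, mem_univ q⟩)]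

lemma pair_marginal (lam : ∀ i, Fin (m i) → ℝ) (h1 : ∀ i, ∑ t, lam i t = 1)
    {p q : ι} (hpq : p ≠ q) (φ : Fin (m p) → ℝ) (ψ : Fin (m q) → ℝ) :
    ∑ a : (∀ i, Fin (m i)), (∏ i, lam i (a i)) * (φ (a p) * ψ (a q))
      = (∑ j, lam p j * φ j) * (∑ k, lam q k * ψ k) := by
  classical
  set g : ∀ i, Fin (m i) → ℝ :=
    Function.update (Function.update lam p (fun t => lam p t * φ t)) q
      (fun t => lam q t * ψ t) with hg
  have hgp : g p = fun t => lam p t * φ t := by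
    rw [hg, Function.update_of_ne hpq, Function.update_self]
  have hgq : g q = fun t => lam q t * ψ t := by rw [hg, Function.update_self]
  have hgo : ∀ i, i ≠ p → i ≠ q → g i = lam i := by
    intro i hip hiq; rw [hg, Function.update_of_ne hiq, Function.update_of_ne hip]
  have h2 : ∀ a : (∀ i, Fin (m i)),
      (∏ i, lam i (a i)) * (φ (a p) * ψ (a q)) = ∏ i, g i (a i) := by
    intro a
    rw [prod_split hpq (fun i => g i (a i)), prod_split hpq (fun i => lam i (a i))]
    have hrest : ∏ i ∈ (univ.erase p).erase q, g i (a i)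
        = ∏ i ∈ (univ.erase p).erase q, lam i (a i) := by
      refine Finset.prod_congr rfl fun i hi => ?_
      rw [hgo i (Finset.ne_of_mem_erase (Finset.mem_of_mem_erase hi))
        (Finset.ne_of_mem_erase hi)]
    rw [hrest, hgp, hgq]; ring
  calc ∑ a : (∀ i, Fin (m i)), (∏ i, lam i (a i)) * (φ (a p) * ψ (a q))
      = ∑ a : (∀ i, Fin (m i)), ∏ i, g i (a i) := Finset.sum_congr rfl fun a _ => h2 a
    _ = ∑ a ∈ Fintype.piFinset (fun i => (univ : Finset (Fin (m i)))), ∏ i, g i (a i) := by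
        rw [Fintype.piFinset_univ]
    _ = ∏ i, ∑ t, g i t := (Finset.prod_univ_sum _ _).symm
    _ = (∑ j, lam p j * φ j) * (∑ k, lam q k * ψ k) := by
        rw [prod_split hpq (fun i => ∑ t, g i t), hgp, hgq]
        have hone : ∏ i ∈ (univ.erase p).erase q, ∑ t, g i t = 1 := by
          refine Finset.prod_eq_one fun i hi => ?_
          rw [hgo i (Finset.ne_of_mem_erase (Finset.mem_of_mem_erase hi))
            (Finset.ne_of_mem_erase hi)]
          exact h1 i
        rw [hone]; ring

lemma pair_marginal_inner (lam : ∀ i, Fin (m i) → ℝ) (h1 : ∀ i, ∑ t, lam i t = 1)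
    {p q : ι} (hpq : p ≠ q) (v : Fin (m p) → Ed d) (y : Fin (m q) → Ed d) :
    ∑ a : (∀ i, Fin (m i)), (∏ i, lam i (a i)) * ⟪v (a p), y (a q)⟫
      = ∑ j, ∑ k, (lam p j * lam q k) * ⟪v j, y k⟫ := by
  have hinner : ∀ (a b : Ed d), ⟪a, b⟫ = ∑ t : Fin d, a t * b t := by
    intro a b
    rw [PiLp.inner_apply]
    simp [RCLike.inner_apply, mul_comm]
  calc ∑ a : (∀ i, Fin (m i)), (∏ i, lam i (a i)) * ⟪v (a p), y (a q)⟫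
      = ∑ a : (∀ i, Fin (m i)), ∑ t : Fin d,
          (∏ i, lam i (a i)) * ((fun j => v j t) (a p) * (fun k => y k t) (a q)) := by
        refine Finset.sum_congr rfl fun a _ => ?_
        rw [hinner, Finset.mul_sum]
    _ = ∑ t : Fin d, ∑ a : (∀ i, Fin (m i)),
          (∏ i, lam i (a i)) * ((fun j => v j t) (a p) * (fun k => y k t) (a q)) :=
        Finset.sum_comm
    _ = ∑ t : Fin d, (∑ j, lam p j * v j t) * (∑ k, lam q k * y k t) :=
        Finset.sum_congr rfl fun t _ => by
          simpa using pair_marginal lam h1 hpq (fun j => v j t) (fun k => y k t)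
    _ = ∑ j, ∑ k, (lam p j * lam q k) * ⟪v j, y k⟫ := by
        simp_rw [hinner, Finset.sum_mul_sum, Finset.mul_sum]
        rw [Finset.sum_comm]
        refine Finset.sum_congr rfl fun j _ => ?_
        rw [Finset.sum_comm]
        refine Finset.sum_congr rfl fun k _ => Finset.sum_congr rfl fun t _ => by ring

lemma marginal_term (lam : ∀ i, Fin (m i) → ℝ) (h1 : ∀ i, ∑ t, lam i t = 1)
    {p q : ι} (hpq : p ≠ q) (v w : Fin (m p) → Ed d) (y : Fin (m q) → Ed d)
    (xq : Ed d) (hq : ∑ k, lam q k • y k = xq) :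
    ∑ a : (∀ i, Fin (m i)), (∏ i, lam i (a i)) * ⟪v (a p), w (a p) - y (a q)⟫
      = ∑ j, lam p j * ⟪v j, w j - xq⟫ := by
  have expand : ∀ a : (∀ i, Fin (m i)),
      (∏ i, lam i (a i)) * ⟪v (a p), w (a p) - y (a q)⟫
        = (∏ i, lam i (a i)) * ((fun j => ⟪v j, w j⟫) (a p) * (fun _ => (1:ℝ)) (a q))
          - (∏ i, lam i (a i)) * ⟪v (a p), y (a q)⟫ := by
    intro a
    rw [inner_sub_right]
    ring
  have e1 := pair_marginal lam h1 hpq (fun j => ⟪v j, w j⟫) (fun _ => (1:ℝ))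
  rw [Finset.sum_congr rfl fun a _ => expand a, Finset.sum_sub_distrib, e1,
    pair_marginal_inner lam h1 hpq v y]
  have hcol : ∀ j, ∑ k, (lam p j * lam q k) * ⟪v j, y k⟫ = lam p j * ⟪v j, xq⟫ := by
    intro j
    have : ∑ k, (lam p j * lam q k) * ⟪v j, y k⟫
        = lam p j * ∑ k, ⟪v j, lam q k • y k⟫ := by
      rw [Finset.mul_sum]
      refine Finset.sum_congr rfl fun k _ => ?_
      rw [real_inner_smul_right]; ring
    rw [this, ← inner_sum, hq]
  rw [Finset.sum_congr rfl fun j _ => hcol j]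
  have : (∑ k, lam q k * 1) = 1 := by simpa using h1 q
  rw [this, mul_one, ← Finset.sum_sub_distrib]
  refine Finset.sum_congr rfl fun j _ => ?_
  rw [inner_sub_right]; ring

end Marginal

section Reindex

variable [NeZero N]

lemma sum_Icc_one_natCast (f : Fin N → ℝ) :
    ∑ i ∈ Icc 1 N, f ((i : ℕ) : Fin N) = ∑ v : Fin N, f v := by
  have hN : 0 < N := Nat.pos_of_ne_zero (NeZero.ne N)
  refine Finset.sum_nbij' (fun i => ((i : ℕ) : Fin N))
    (fun v => if (v : ℕ) = 0 then N else (v : ℕ)) ?_ ?_ ?_ ?_ ?_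
  · intro a _; exact mem_univ _
  · intro v _
    by_cases h : (v : ℕ) = 0 <;> simp [h, mem_Icc] <;> omega
  · intro a ha
    rw [mem_Icc] at ha
    rcases Nat.lt_or_ge a N with h | h
    · rw [Fin.val_natCast, Nat.mod_eq_of_lt h]
      have : a ≠ 0 := by omega
      simp [this]
    · have : a = N := by omega
      subst this
      simp [Fin.val_natCast, Nat.mod_self]
  · intro v _
    by_cases h : (v : ℕ) = 0
    · rw [if_pos h]
      have : ((N : ℕ) : Fin N) = 0 := Fin.natCast_self N
      rw [this]
      symm
      apply Fin.ext
      simp [h]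
    · rw [if_neg h, Fin.cast_val_eq_self]
  · intro a _; rfl

end Reindex

section Cyc

lemma cyc_iterate [NeZero N] {α : Type*} (x : Fin N → α) (i : ℕ) (j : Fin N) :
    (cyc^[i] x) j = x (j + (i : Fin N)) := by
  induction i generalizing x with
  | zero => simp
  | succ i ih =>
    obtain ⟨n, rfl⟩ : ∃ n, N = n + 1 := Nat.exists_eq_succ_of_ne_zero (NeZero.ne N)
    rw [Function.iterate_succ_apply, ih (cyc x)]
    show x (finRotate (n + 1) (j + (i : Fin (n+1)))) = _
    rw [finRotate_succ_apply]
    have : ((i+1 : ℕ) : Fin (n+1)) = (i : Fin (n+1)) + 1 := by push_cast; ring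
    rw [this, add_assoc]

end Cyc

section Key

variable [NeZero N]

/-- The key inequality: joint N-monotonicity survives convex decompositions. -/
lemma key {Ω : Set (Ed d)} {u : ℕ → Ed d → Ed d}
    (hmono : JointlyNMonotone N Ω u) (x : Fin N → Ed d)
    (m : ℕ) (lam : Fin N → Fin m → ℝ) (z : Fin N → Fin m → Ed d)
    (h0 : ∀ i j, 0 ≤ lam i j) (h1 : ∀ i, ∑ j, lam i j = 1)
    (hz : ∀ i j, z i j ∈ Ω) (hbar : ∀ i, ∑ j, lam i j • z i j = x i) :
    ∑ v : Fin N, ∑ j, lam v j *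
      (∑ ℓ ∈ Icc 1 (N - 1), ⟪u ℓ (z v j), x (v + ((ℓ : ℕ) : Fin N)) - z v j⟫) ≤ 0 := by
  classical
  -- each pure cycle gives the monotonicity inequality
  have mono_a : ∀ a : Fin N → Fin m,
      0 ≤ ∑ i ∈ Icc 1 N, ∑ ℓ ∈ Icc 1 (N - 1),
        ⟪u ℓ (z (i : Fin N) (a (i : Fin N))),
          z (i : Fin N) (a (i : Fin N)) - z ((i + ℓ : ℕ) : Fin N) (a ((i + ℓ : ℕ) : Fin N))⟫ := by
    intro a
    have := hmono (fun n => z ((n : ℕ) : Fin N) (a ((n : ℕ) : Fin N)))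
      (fun i _ _ => hz _ _)
      (fun i _ _ => by
        have : ((N + i : ℕ) : Fin N) = ((i : ℕ) : Fin N) := by
          push_cast [Fin.natCast_self]; simp
        simp only [this])
    exact this
  have nonneg : 0 ≤ ∑ a : Fin N → Fin m, (∏ i, lam i (a i)) *
      (∑ i ∈ Icc 1 N, ∑ ℓ ∈ Icc 1 (N - 1),
        ⟪u ℓ (z (i : Fin N) (a (i : Fin N))),
          z (i : Fin N) (a (i : Fin N)) - z ((i + ℓ : ℕ) : Fin N) (a ((i + ℓ : ℕ) : Fin N))⟫) := by
    refine Finset.sum_nonneg fun a _ => mul_nonneg (Finset.prod_nonneg fun i _ => h0 _ _)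
      (mono_a a)
  -- swap the sums and marginalize
  have swap : ∑ a : Fin N → Fin m, (∏ i, lam i (a i)) *
      (∑ i ∈ Icc 1 N, ∑ ℓ ∈ Icc 1 (N - 1),
        ⟪u ℓ (z (i : Fin N) (a (i : Fin N))),
          z (i : Fin N) (a (i : Fin N)) - z ((i + ℓ : ℕ) : Fin N) (a ((i + ℓ : ℕ) : Fin N))⟫)
      = ∑ i ∈ Icc 1 N, ∑ ℓ ∈ Icc 1 (N - 1), ∑ j, lam (i : Fin N) j *
          ⟪u ℓ (z (i : Fin N) j), z (i : Fin N) j - x ((i : Fin N) + ((ℓ : ℕ) : Fin N))⟫ := by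
    simp_rw [Finset.mul_sum]
    rw [Finset.sum_comm]
    refine Finset.sum_congr rfl fun i hi => ?_
    rw [Finset.sum_comm]
    refine Finset.sum_congr rfl fun ℓ hℓ => ?_
    have hℓm := mem_Icc.1 hℓ
    have hcast : ((i + ℓ : ℕ) : Fin N) = (i : Fin N) + ((ℓ : ℕ) : Fin N) := by push_cast; ring
    have hpq : (i : Fin N) ≠ (i : Fin N) + ((ℓ : ℕ) : Fin N) := by
      intro h
      exact cast_ne_zero hℓm.1 hℓm.2 (add_eq_left.1 h.symm)
    have := marginal_term (m := fun _ : Fin N => m) lam h1 hpq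
      (fun j => u ℓ (z (i : Fin N) j)) (fun j => z (i : Fin N) j)
      (fun k => z ((i : Fin N) + ((ℓ : ℕ) : Fin N)) k)
      (x ((i : Fin N) + ((ℓ : ℕ) : Fin N))) (hbar _)
    calc ∑ a : Fin N → Fin m, (∏ i, lam i (a i)) *
          ⟪u ℓ (z (i : Fin N) (a (i : Fin N))),
            z (i : Fin N) (a (i : Fin N)) - z ((i + ℓ : ℕ) : Fin N) (a ((i + ℓ : ℕ) : Fin N))⟫
        = ∑ a : Fin N → Fin m, (∏ i, lam i (a i)) *
          ⟪u ℓ (z (i : Fin N) (a (i : Fin N))),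
            z (i : Fin N) (a (i : Fin N))
              - z ((i : Fin N) + ((ℓ : ℕ) : Fin N)) (a ((i : Fin N) + ((ℓ : ℕ) : Fin N)))⟫ := by
          refine Finset.sum_congr rfl fun a _ => ?_
          rw [hcast]
      _ = ∑ j, lam (i : Fin N) j *
          ⟪u ℓ (z (i : Fin N) j), z (i : Fin N) j - x ((i : Fin N) + ((ℓ : ℕ) : Fin N))⟫ := this
  rw [swap] at nonneg
  -- reindex `i ∈ Icc 1 N` into `v : Fin N`
  have reind : ∑ i ∈ Icc 1 N, ∑ ℓ ∈ Icc 1 (N - 1), ∑ j, lam (i : Fin N) j *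
        ⟪u ℓ (z (i : Fin N) j), z (i : Fin N) j - x ((i : Fin N) + ((ℓ : ℕ) : Fin N))⟫
      = ∑ v : Fin N, ∑ ℓ ∈ Icc 1 (N - 1), ∑ j, lam v j *
        ⟪u ℓ (z v j), z v j - x (v + ((ℓ : ℕ) : Fin N))⟫ :=
    sum_Icc_one_natCast (fun v => ∑ ℓ ∈ Icc 1 (N - 1), ∑ j, lam v j *
      ⟪u ℓ (z v j), z v j - x (v + ((ℓ : ℕ) : Fin N))⟫)
  rw [reind] at nonneg
  have hTA : (∑ v : Fin N, ∑ j, lam v j *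
      (∑ ℓ ∈ Icc 1 (N - 1), ⟪u ℓ (z v j), x (v + ((ℓ : ℕ) : Fin N)) - z v j⟫))
      + (∑ v : Fin N, ∑ ℓ ∈ Icc 1 (N - 1), ∑ j, lam v j *
        ⟪u ℓ (z v j), z v j - x (v + ((ℓ : ℕ) : Fin N))⟫) = 0 := by
    rw [← Finset.sum_add_distrib]
    refine Finset.sum_eq_zero fun v _ => ?_
    have hsw : ∑ ℓ ∈ Icc 1 (N - 1), ∑ j, lam v j *
          ⟪u ℓ (z v j), z v j - x (v + ((ℓ : ℕ) : Fin N))⟫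
        = ∑ j, ∑ ℓ ∈ Icc 1 (N - 1), lam v j *
          ⟪u ℓ (z v j), z v j - x (v + ((ℓ : ℕ) : Fin N))⟫ := Finset.sum_comm
    rw [hsw, ← Finset.sum_add_distrib]
    refine Finset.sum_eq_zero fun j _ => ?_
    rw [Finset.mul_sum, ← Finset.sum_add_distrib]
    refine Finset.sum_eq_zero fun ℓ _ => ?_
    rw [inner_sub_right, inner_sub_right]
    ring
  linarith

end Key

section SSlemmas

variable [NeZero N] {Ω : Set (Ed d)} {u : ℕ → Ed d → Ed d}

lemma cost_mem_SS (x : Fin N → Ed d) (hx0 : x 0 ∈ Ω) : cost u x ∈ SS Ω u x := by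
  refine ⟨1, fun _ => 1, fun _ => x 0, fun _ => zero_le_one, by simp, fun _ => hx0, by simp, ?_⟩
  simp [Function.update_eq_self]

lemma SS_le {R : ℝ} (hR : ∀ a ∈ Ω, ‖a‖ ≤ R) {C : ℕ → ℝ}
    (hC : ∀ ℓ ∈ Icc 1 (N - 1), ∀ a ∈ Ω, ‖u ℓ a‖ ≤ C ℓ)
    (hΩne : Ω.Nonempty)
    (x : Fin N → Ed d) (hx : ∀ i : Fin N, i ≠ 0 → x i ∈ Ω) :
    ∀ r ∈ SS Ω u x, r ≤ ∑ ℓ ∈ Icc 1 (N - 1), C ℓ * (2 * R) := by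
  rintro r ⟨m, lam, z, h0, h1, hz, hbar, rfl⟩
  obtain ⟨w₀, hw₀⟩ := hΩne
  have hC0 : ∀ ℓ ∈ Icc 1 (N - 1), 0 ≤ C ℓ := fun ℓ hℓ =>
    le_trans (norm_nonneg _) (hC ℓ hℓ w₀ hw₀)
  have costb : ∀ w ∈ Ω, cost u (Function.update x 0 w)
      ≤ ∑ ℓ ∈ Icc 1 (N - 1), C ℓ * (2 * R) := by
    intro w hw
    rw [cost_update]
    refine Finset.sum_le_sum fun ℓ hℓ => ?_
    have h1ℓ := mem_Icc.1 hℓ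
    have hxl : x ((ℓ : ℕ) : Fin N) ∈ Ω := hx _ (cast_ne_zero h1ℓ.1 h1ℓ.2)
    calc ⟪u ℓ w, x ((ℓ : ℕ) : Fin N) - w⟫
        ≤ ‖u ℓ w‖ * ‖x ((ℓ : ℕ) : Fin N) - w‖ := real_inner_le_norm _ _
      _ ≤ C ℓ * (2 * R) := by
          apply mul_le_mul (hC ℓ hℓ w hw) ?_ (norm_nonneg _) (hC0 ℓ hℓ)
          calc ‖x ((ℓ : ℕ) : Fin N) - w‖ ≤ ‖x ((ℓ : ℕ) : Fin N)‖ + ‖w‖ := norm_sub_le _ _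
            _ ≤ R + R := add_le_add (hR _ hxl) (hR _ hw)
            _ = 2 * R := by ring
  calc ∑ j, lam j * cost u (Function.update x 0 (z j))
      ≤ ∑ j, lam j * (∑ ℓ ∈ Icc 1 (N - 1), C ℓ * (2 * R)) :=
        Finset.sum_le_sum fun j _ => mul_le_mul_of_nonneg_left (costb _ (hz j)) (h0 j)
    _ = ∑ ℓ ∈ Icc 1 (N - 1), C ℓ * (2 * R) := by rw [← Finset.sum_mul, h1, one_mul]

lemma sum_trunc {β : Type*} [AddCommMonoid β] {m M : ℕ} (hM : m ≤ M) (F : ℕ → β)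
    (hF : ∀ n, m ≤ n → F n = 0) : ∑ j : Fin M, F (j : ℕ) = ∑ j : Fin m, F (j : ℕ) := by
  rw [Fin.sum_univ_eq_sum_range, Fin.sum_univ_eq_sum_range]
  exact (Finset.sum_subset (Finset.range_subset_range.2 hM)
    (fun n _ hn => hF n (by simpa using hn))).symm

lemma decomp_pad {ω₀ : Ed d} (hω₀ : ω₀ ∈ Ω) {m M : ℕ} (hM : m ≤ M)
    (lam : Fin m → ℝ) (z : Fin m → Ed d) (x₀ : Ed d)
    (h0 : ∀ j, 0 ≤ lam j) (h1 : ∑ j, lam j = 1) (hz : ∀ j, z j ∈ Ω)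
    (hbar : ∑ j, lam j • z j = x₀) (F : Ed d → ℝ) :
    ∃ (lam' : Fin M → ℝ) (z' : Fin M → Ed d),
      (∀ j, 0 ≤ lam' j) ∧ (∑ j, lam' j = 1) ∧ (∀ j, z' j ∈ Ω) ∧
      (∑ j, lam' j • z' j = x₀) ∧
      (∑ j, lam' j * F (z' j)) = ∑ j, lam j * F (z j) := by
  classical
  refine ⟨fun j => if h : (j : ℕ) < m then lam ⟨j, h⟩ else 0,
          fun j => if h : (j : ℕ) < m then z ⟨j, h⟩ else ω₀, ?_, ?_, ?_, ?_, ?_⟩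
  · intro j; by_cases h : (j : ℕ) < m <;> simp [h, h0]
  · have e := sum_trunc (β := ℝ) hM (fun n : ℕ => if h : n < m then lam ⟨n, h⟩ else 0)
      (fun n hn => by simp [Nat.not_lt.2 hn])
    rw [show (∑ j : Fin M, if h : (j : ℕ) < m then lam ⟨j, h⟩ else 0)
        = ∑ j : Fin M, (fun n : ℕ => if h : n < m then lam ⟨n, h⟩ else 0) (j : ℕ) from rfl,
      e, ← h1]
    refine Finset.sum_congr rfl fun j _ => ?_
    simp [j.isLt]
  · intro j; by_cases h : (j : ℕ) < m <;> simp [h, hz, hω₀]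
  · have step : ∀ j : Fin M,
        (if h : (j : ℕ) < m then lam ⟨j, h⟩ else 0) •
          (if h : (j : ℕ) < m then z ⟨j, h⟩ else ω₀)
        = (fun n : ℕ => if h : n < m then lam ⟨n, h⟩ • z ⟨n, h⟩ else 0) (j : ℕ) := by
      intro j; by_cases h : (j : ℕ) < m <;> simp [h]
    have e := sum_trunc (β := Ed d) hM
      (fun n : ℕ => if h : n < m then lam ⟨n, h⟩ • z ⟨n, h⟩ else 0)
      (fun n hn => by simp [Nat.not_lt.2 hn])
    rw [Finset.sum_congr rfl fun j _ => step j, e, ← hbar]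
    refine Finset.sum_congr rfl fun j _ => ?_
    simp [j.isLt]
  · have step : ∀ j : Fin M,
        (if h : (j : ℕ) < m then lam ⟨j, h⟩ else 0) *
          F (if h : (j : ℕ) < m then z ⟨j, h⟩ else ω₀)
        = (fun n : ℕ => if h : n < m then lam ⟨n, h⟩ * F (z ⟨n, h⟩) else 0) (j : ℕ) := by
      intro j; by_cases h : (j : ℕ) < m <;> simp [h]
    have e := sum_trunc (β := ℝ) hM
      (fun n : ℕ => if h : n < m then lam ⟨n, h⟩ * F (z ⟨n, h⟩) else 0)
      (fun n hn => by simp [Nat.not_lt.2 hn])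
    rw [Finset.sum_congr rfl fun j _ => step j, e]
    refine Finset.sum_congr rfl fun j _ => ?_
    simp [j.isLt]

lemma mem_SS_combo {x : Fin N → Ed d} {a b : Ed d} {t s : ℝ}
    (ht : 0 ≤ t) (hs : 0 ≤ s) (hts : t + s = 1) {r₁ r₂ : ℝ}
    (hr₁ : r₁ ∈ SS Ω u (Function.update x 0 a))
    (hr₂ : r₂ ∈ SS Ω u (Function.update x 0 b)) :
    t * r₁ + s * r₂ ∈ SS Ω u (Function.update x 0 (t • a + s • b)) := by
  obtain ⟨m₁, lam₁, z₁, h0₁, h1₁, hz₁, hbar₁, rfl⟩ := hr₁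
  obtain ⟨m₂, lam₂, z₂, h0₂, h1₂, hz₂, hbar₂, rfl⟩ := hr₂
  rw [Function.update_self] at hbar₁ hbar₂
  refine ⟨m₁ + m₂, Fin.append (fun j => t * lam₁ j) (fun j => s * lam₂ j),
    Fin.append z₁ z₂, ?_, ?_, ?_, ?_, ?_⟩
  · intro j
    refine Fin.addCases (fun i => ?_) (fun i => ?_) j <;>
      simp only [Fin.append_left, Fin.append_right] <;>
      exact mul_nonneg (by assumption) (by apply_rules)
  · rw [Fin.sum_univ_add]
    simp only [Fin.append_left, Fin.append_right]
    rw [← Finset.mul_sum, ← Finset.mul_sum, h1₁, h1₂]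
    simpa using hts
  · intro j
    refine Fin.addCases (fun i => ?_) (fun i => ?_) j <;>
      simp only [Fin.append_left, Fin.append_right] <;> apply_rules
  · rw [Fin.sum_univ_add]
    simp only [Fin.append_left, Fin.append_right, Function.update_self]
    have e1 : ∀ j, (t * lam₁ j) • z₁ j = t • (lam₁ j • z₁ j) := fun j => mul_smul _ _ _
    have e2 : ∀ j, (s * lam₂ j) • z₂ j = s • (lam₂ j • z₂ j) := fun j => mul_smul _ _ _
    rw [Finset.sum_congr rfl fun j _ => e1 j, Finset.sum_congr rfl fun j _ => e2 j,
      ← Finset.smul_sum, ← Finset.smul_sum, hbar₁, hbar₂]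
  · rw [Fin.sum_univ_add]
    simp only [Fin.append_left, Fin.append_right, Function.update_idem]
    rw [Finset.mul_sum, Finset.mul_sum]
    congr 1 <;> exact Finset.sum_congr rfl fun j _ => by ring

lemma exists_near_sSup {S : Set ℝ} (hne : S.Nonempty) {ε : ℝ} (hε : 0 < ε) :
    ∃ r ∈ S, sSup S ≤ r + ε := by
  obtain ⟨r, hr, hlt⟩ := exists_lt_of_lt_csSup hne (show sSup S - ε < sSup S by linarith)
  exact ⟨r, hr, by linarith⟩

end SSlemmas

end S0

open S0

theorem statement0 {d : ℕ} (N : ℕ) [NeZero N] (hN : 2 ≤ N)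
    (Ω : Set (Ed d)) (hΩopen : IsOpen Ω) (hΩconv : Convex ℝ Ω)
    (hΩbdd : Bornology.IsBounded Ω) (hΩne : Ω.Nonempty)
    (u : ℕ → Ed d → Ed d)
    (hubdd : ∀ ℓ ∈ Icc 1 (N - 1), ∃ C : ℝ, ∀ x ∈ Ω, ‖u ℓ x‖ ≤ C)
    (hmono : JointlyNMonotone N Ω u) :
    ∃ H : (Fin N → Ed d) → ℝ,
      -- (i) `H` is `N`-sub-antisymmetric
      NSubAntisymmetric N Ω H ∧
      -- (ii) `H` vanishes on the diagonal of `Ω^N`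
      (∀ x ∈ Ω, H (fun _ => x) = 0) ∧
      -- (iii) `H` is concave in the first variable
      (∀ x : Fin N → Ed d, (∀ i, x i ∈ Ω) →
        ConcaveOn ℝ Ω (fun z => H (Function.update x 0 z))) ∧
      -- (iv) `H` is jointly convex in the last `N-1` variables
      (∀ x₁ ∈ Ω, ConvexOn ℝ {y : Fin N → Ed d | ∀ i, y i ∈ Ω}
        (fun y => H (Function.update y 0 x₁))) ∧
      -- (v) the subgradient inequality
      (∀ x ∈ Ω, ∀ y : Fin N → Ed d, (∀ i, y i ∈ Ω) →
        ∑ ℓ ∈ Icc 1 (N - 1), ⟪u ℓ x, y (Fin.ofNat N ℓ) - x⟫ ≤ H (Function.update y 0 x)) := by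
  classical
  obtain ⟨ω₀, hω₀⟩ := hΩne
  obtain ⟨R, hR⟩ := hΩbdd.exists_norm_le
  choose! C hC using hubdd
  have SSbdd : ∀ x : Fin N → Ed d, (∀ i : Fin N, i ≠ 0 → x i ∈ Ω) →
      BddAbove (SS Ω u x) := fun x hx =>
    ⟨∑ ℓ ∈ Icc 1 (N - 1), C ℓ * (2 * R), fun r hr => SS_le hR hC ⟨ω₀, hω₀⟩ x hx r hr⟩
  refine ⟨HH Ω u, ?_, ?_, ?_, ?_, ?_⟩
  -- (i) sub-antisymmetry
  · intro x hx
    have hcoords : ∀ (i : ℕ) (j : Fin N), (cyc^[i] x) j ∈ Ω := fun i j => by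
      rw [cyc_iterate]; exact hx _
    have hNpos : 0 < N := Nat.pos_of_ne_zero (NeZero.ne N)
    apply le_of_forall_pos_le_add
    intro ε hε
    have hε' : 0 < ε / N := div_pos hε (by exact_mod_cast hNpos)
    have pick : ∀ v : Fin N, ∃ r ∈ SS Ω u (cyc^[(v : ℕ)] x),
        HH Ω u (cyc^[(v : ℕ)] x) ≤ r + ε / N := fun v =>
      exists_near_sSup ⟨_, cost_mem_SS _ (hcoords _ 0)⟩ hε'
    choose r hrS hrle using pick
    have reps := fun v : Fin N => hrS v
    choose m lam z h0 h1 hz hbar hval using reps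
    set M := Finset.univ.sup m with hMdef
    have hM : ∀ v, m v ≤ M := fun v => Finset.le_sup (mem_univ v)
    have pads : ∀ v : Fin N, ∃ (lam' : Fin M → ℝ) (z' : Fin M → Ed d),
        (∀ j, 0 ≤ lam' j) ∧ (∑ j, lam' j = 1) ∧ (∀ j, z' j ∈ Ω) ∧
        (∑ j, lam' j • z' j = (cyc^[(v : ℕ)] x) 0) ∧
        (∑ j, lam' j * cost u (Function.update (cyc^[(v : ℕ)] x) 0 (z' j)))
          = ∑ j, lam v j * cost u (Function.update (cyc^[(v : ℕ)] x) 0 (z v j)) :=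
      fun v => decomp_pad hω₀ (hM v) (lam v) (z v) _ (h0 v) (h1 v) (hz v) (hbar v)
        (fun w => cost u (Function.update (cyc^[(v : ℕ)] x) 0 w))
    choose lam' z' h0' h1' hz' hbar' hval' using pads
    have hbar'' : ∀ v : Fin N, ∑ j, lam' v j • z' v j = x v := by
      intro v
      rw [hbar' v, cyc_iterate, zero_add, Fin.cast_val_eq_self]
    have hkey := key hmono x M lam' z' h0' h1' hz' hbar''
    have hident : ∀ v : Fin N, (∑ j, lam' v j *
        (∑ ℓ ∈ Icc 1 (N - 1), ⟪u ℓ (z' v j), x (v + ((ℓ : ℕ) : Fin N)) - z' v j⟫)) = r v := by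
      intro v
      rw [hval v, ← hval' v]
      refine Finset.sum_congr rfl fun j _ => ?_
      congr 1
      rw [cost_update]
      refine Finset.sum_congr rfl fun ℓ _ => ?_
      rw [cyc_iterate, Fin.cast_val_eq_self, add_comm]
    rw [Finset.sum_congr rfl fun v _ => hident v] at hkey
    have hsum : ∑ i ∈ range N, HH Ω u (cyc^[i] x)
        = ∑ v : Fin N, HH Ω u (cyc^[(v : ℕ)] x) :=
      (Fin.sum_univ_eq_sum_range (fun n => HH Ω u (cyc^[n] x)) N).symm
    rw [hsum]
    calc ∑ v : Fin N, HH Ω u (cyc^[(v : ℕ)] x)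
        ≤ ∑ v : Fin N, (r v + ε / N) := Finset.sum_le_sum fun v _ => hrle v
      _ = (∑ v : Fin N, r v) + N * (ε / N) := by
          rw [Finset.sum_add_distrib, Finset.sum_const, Finset.card_univ, Fintype.card_fin,
            nsmul_eq_mul]
      _ ≤ 0 + ε := by
          have : (N : ℝ) * (ε / N) = ε := by
            field_simp
          rw [this]
          linarith
  -- (ii) diagonal
  · intro x hx
    have hx0 : (fun _ : Fin N => x) 0 ∈ Ω := hx
    have hb := SSbdd (fun _ => x) (fun i _ => hx)
    have hcost0 : cost u (fun _ : Fin N => x) = 0 := by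
      unfold S0.cost
      simp
    refine le_antisymm ?_ ?_
    · refine csSup_le ⟨_, cost_mem_SS _ hx0⟩ ?_
      rintro r ⟨m, lam, z, h0, h1, hz, hbar, rfl⟩
      have hm : 1 ≤ m := by
        by_contra h
        have : m = 0 := by omega
        subst this
        simp at h1
      obtain ⟨lam₀, z₀, h00, h10, hz0, hbar0, hval0⟩ :=
        decomp_pad (Ω := Ω) hω₀ hm (fun _ : Fin 1 => (1 : ℝ)) (fun _ => x) x
          (fun _ => zero_le_one) (by simp) (fun _ => hx) (by simp)
          (fun w => cost u (Function.update (fun _ : Fin N => x) 0 w))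
      set lamv : Fin N → Fin m → ℝ := fun v => if v = 0 then lam else lam₀ with hlamv
      set zv : Fin N → Fin m → Ed d := fun v => if v = 0 then z else z₀ with hzv
      have hkey := key hmono (fun _ => x) m lamv zv
        (fun v j => by by_cases h : v = 0 <;> simp [hlamv, h, h0, h00])
        (fun v => by by_cases h : v = 0 <;> simp [hlamv, h, h1, h10])
        (fun v j => by by_cases h : v = 0 <;> simp [hzv, h, hz, hz0])
        (fun v => by
          by_cases h : v = 0
          · simpa [hlamv, hzv, h] using hbar
          · simpa [hlamv, hzv, h] using hbar0)
      have hterm : ∀ v : Fin N, (∑ j, lamv v j *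
          (∑ ℓ ∈ Icc 1 (N - 1), ⟪u ℓ (zv v j), (fun _ : Fin N => x) (v + ((ℓ : ℕ) : Fin N)) - zv v j⟫))
          = if v = 0 then ∑ j, lam j * cost u (Function.update (fun _ : Fin N => x) 0 (z j))
            else 0 := by
        intro v
        have hc : ∀ w : Ed d, (∑ ℓ ∈ Icc 1 (N - 1), ⟪u ℓ w, x - w⟫)
            = cost u (Function.update (fun _ : Fin N => x) 0 w) := by
          intro w
          rw [cost_update]
        by_cases h : v = 0
        · rw [if_pos h]
          simp only [hlamv, hzv, h, if_true]
          refine Finset.sum_congr rfl fun j _ => ?_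
          rw [← hc (z j)]
        · rw [if_neg h]
          simp only [hlamv, hzv, h, if_false]
          have : (∑ j, lam₀ j * cost u (Function.update (fun _ : Fin N => x) 0 (z₀ j))) = 0 := by
            rw [hval0]
            have hcu : cost u (Function.update (fun _ : Fin N => x) 0 x) = 0 := by
              rw [Function.update_eq_self]
              exact hcost0
            simp [hcu, hcost0]
          rw [← this]
          refine Finset.sum_congr rfl fun j _ => ?_
          rw [← hc (z₀ j)]
      rw [Finset.sum_congr rfl fun v _ => hterm v, Finset.sum_ite_eq' univ (0 : Fin N),
        if_pos (mem_univ _)] at hkey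
      exact hkey
    · have h0mem : (0 : ℝ) ∈ SS Ω u (fun _ : Fin N => x) := by
        rw [← hcost0]
        exact cost_mem_SS _ hx0
      exact le_csSup hb h0mem
  -- (iii) concavity in the first variable
  · intro x hx
    refine ⟨hΩconv, ?_⟩
    intro a ha b hb t s ht hs hts
    simp only [smul_eq_mul]
    have htail : ∀ (w : Ed d), ∀ i : Fin N, i ≠ 0 → Function.update x 0 w i ∈ Ω := by
      intro w i hi
      rw [Function.update_of_ne hi]
      exact hx i
    have hne : ∀ w ∈ Ω, (SS Ω u (Function.update x 0 w)).Nonempty := fun w hw =>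
      ⟨_, cost_mem_SS _ (by rw [Function.update_self]; exact hw)⟩
    apply le_of_forall_pos_le_add
    intro ε hε
    obtain ⟨r₁, hr₁, hle₁⟩ := exists_near_sSup (hne a ha) hε
    obtain ⟨r₂, hr₂, hle₂⟩ := exists_near_sSup (hne b hb) hε
    have hmem := mem_SS_combo ht hs hts hr₁ hr₂
    have hup : t * r₁ + s * r₂ ≤ HH Ω u (Function.update x 0 (t • a + s • b)) :=
      le_csSup (SSbdd _ (htail _)) hmem
    have e1 : t * HH Ω u (Function.update x 0 a) ≤ t * (r₁ + ε) :=
      mul_le_mul_of_nonneg_left hle₁ ht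
    have e2 : s * HH Ω u (Function.update x 0 b) ≤ s * (r₂ + ε) :=
      mul_le_mul_of_nonneg_left hle₂ hs
    have e3 : t * ε + s * ε = ε := by rw [← add_mul, hts, one_mul]
    show t * HH Ω u (Function.update x 0 a) + s * HH Ω u (Function.update x 0 b)
        ≤ HH Ω u (Function.update x 0 (t • a + s • b)) + ε
    nlinarith [e1, e2, e3, hup]
  -- (iv) joint convexity in the remaining variables
  · intro x₁ hx₁
    constructor
    · intro y₁ h₁ y₂ h₂ t s ht hs hts i
      have : (t • y₁ + s • y₂) i = t • y₁ i + s • y₂ i := rfl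
      rw [Set.mem_setOf_eq] at h₁ h₂
      exact hΩconv (h₁ i) (h₂ i) ht hs hts
    · intro y₁ h₁ y₂ h₂ t s ht hs hts
      rw [Set.mem_setOf_eq] at h₁ h₂
      simp only [smul_eq_mul]
      have hne3 : (SS Ω u (Function.update (t • y₁ + s • y₂) 0 x₁)).Nonempty :=
        ⟨_, cost_mem_SS _ (by rw [Function.update_self]; exact hx₁)⟩
      refine csSup_le hne3 ?_
      rintro rr ⟨m, lam, z, h0, h1, hz, hbar, rfl⟩
      rw [Function.update_self] at hbar
      have hsplit : ∀ w : Ed d, cost u (Function.update (t • y₁ + s • y₂) 0 w)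
          = t * cost u (Function.update y₁ 0 w) + s * cost u (Function.update y₂ 0 w) := by
        intro w
        rw [cost_update, cost_update, cost_update, Finset.mul_sum, Finset.mul_sum,
          ← Finset.sum_add_distrib]
        refine Finset.sum_congr rfl fun ℓ _ => ?_
        have happ : (t • y₁ + s • y₂) ((ℓ : ℕ) : Fin N)
            = t • y₁ ((ℓ : ℕ) : Fin N) + s • y₂ ((ℓ : ℕ) : Fin N) := rfl
        rw [happ]
        have hw : t • w + s • w = w := by rw [← add_smul, hts, one_smul]
        have hcomb : t • y₁ ((ℓ : ℕ) : Fin N) + s • y₂ ((ℓ : ℕ) : Fin N) - w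
            = t • (y₁ ((ℓ : ℕ) : Fin N) - w) + s • (y₂ ((ℓ : ℕ) : Fin N) - w) := by
          calc t • y₁ ((ℓ : ℕ) : Fin N) + s • y₂ ((ℓ : ℕ) : Fin N) - w
              = t • y₁ ((ℓ : ℕ) : Fin N) + s • y₂ ((ℓ : ℕ) : Fin N) - (t • w + s • w) := by
                rw [hw]
            _ = t • (y₁ ((ℓ : ℕ) : Fin N) - w) + s • (y₂ ((ℓ : ℕ) : Fin N) - w) := by
                rw [smul_sub, smul_sub]
                abel
        rw [hcomb, inner_add_right, real_inner_smul_right, real_inner_smul_right]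
      have hr1mem : (∑ j, lam j * cost u (Function.update (Function.update y₁ 0 x₁) 0 (z j)))
          ∈ SS Ω u (Function.update y₁ 0 x₁) := by
        refine ⟨m, lam, z, h0, h1, hz, ?_, rfl⟩
        rw [Function.update_self]
        exact hbar
      have hr2mem : (∑ j, lam j * cost u (Function.update (Function.update y₂ 0 x₁) 0 (z j)))
          ∈ SS Ω u (Function.update y₂ 0 x₁) := by
        refine ⟨m, lam, z, h0, h1, hz, ?_, rfl⟩
        rw [Function.update_self]
        exact hbar
      have htail1 : ∀ i : Fin N, i ≠ 0 → Function.update y₁ 0 x₁ i ∈ Ω := fun i hi => by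
        rw [Function.update_of_ne hi]; exact h₁ i
      have htail2 : ∀ i : Fin N, i ≠ 0 → Function.update y₂ 0 x₁ i ∈ Ω := fun i hi => by
        rw [Function.update_of_ne hi]; exact h₂ i
      have le1 := le_csSup (SSbdd _ htail1) hr1mem
      have le2 := le_csSup (SSbdd _ htail2) hr2mem
      have hrr : (∑ j, lam j * cost u
            (Function.update (Function.update (t • y₁ + s • y₂) 0 x₁) 0 (z j)))
          = t * (∑ j, lam j * cost u (Function.update (Function.update y₁ 0 x₁) 0 (z j)))
            + s * (∑ j, lam j * cost u (Function.update (Function.update y₂ 0 x₁) 0 (z j))) := by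
        rw [Finset.mul_sum, Finset.mul_sum, ← Finset.sum_add_distrib]
        refine Finset.sum_congr rfl fun j _ => ?_
        rw [Function.update_idem, Function.update_idem, Function.update_idem, hsplit]
        ring
      rw [hrr]
      exact add_le_add (mul_le_mul_of_nonneg_left le1 ht) (mul_le_mul_of_nonneg_left le2 hs)
  -- (v) the subgradient inequality
  · intro x hx y hy
    have hmem := cost_mem_SS (Ω := Ω) (u := u) (Function.update y 0 x)
      (by rw [Function.update_self]; exact hx)
    have hb := SSbdd (Function.update y 0 x) (fun i hi => by
      rw [Function.update_of_ne hi]; exact hy i)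
    have hle := le_csSup hb hmem
    have hceq : cost u (Function.update y 0 x)
        = ∑ ℓ ∈ Icc 1 (N - 1), ⟪u ℓ x, y ((ℓ : ℕ) : Fin N) - x⟫ := by
      unfold S0.cost
      rw [Function.update_self]
      refine Finset.sum_congr rfl fun ℓ hℓ => ?_
      rw [Function.update_of_ne (cast_ne_zero (mem_Icc.1 hℓ).1 (mem_Icc.1 hℓ).2)]
    change ∑ ℓ ∈ Icc 1 (N - 1), ⟪u ℓ x, y ((ℓ : ℕ) : Fin N) - x⟫ ≤ _
    rw [← hceq]
    exact hle
end
end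

section
/- Let N ≥ 2, let Ω be a convex bounded domain in ℝ^d, and let u_1,…,u_{N−1} be bounded vector fields from Ω to ℝ^d whose (N−1)-tuple is jointly N-monotone. Then the N-sub-antisymmetric Hamiltonian H of the representation theorem can be chosen so that H(x_1,…,x_N) + H_{2,…,N}(x_1,…,x_N) = 0 for all (x_1,…,x_N) ∈ Ω^N, where H_{2,…,N} denotes the concavification, with respect to the last N−1 variables, of the function K(x_1,…,x_N) = ∑_{i=1}^{N−1} H(σ^i(x_1,…,x_N)); explicitly, H_{2,…,N}(x_1,x_2,…,x_N) = sup{ ∑_{k=1}^{n} λ_k K(x_1, y_2^k, …, y_N^k) : n ∈ ℕ, λ_k ≥ 0, ∑_k λ_k = 1, y_i^k ∈ Ω, ∑_k λ_k (y_2^k,…,y_N^k) = (x_2,…,x_N) }. -/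
open MeasureTheory Finset
open scoped BigOperators RealInnerProductSpace

noncomputable section

/-- `H` is `N`-antisymmetric on `Ω^N` : `∑_{i=0}^{N-1} H(σ^i x) = 0` on `Ω^N`. -/
def NAntisymmetric (N : ℕ) {d : ℕ} (Ω : Set (Ed d)) (H : (Fin N → Ed d) → ℝ) : Prop :=
  ∀ x : Fin N → Ed d, (∀ i, x i ∈ Ω) → ∑ i ∈ range N, H (cyc^[i] x) = 0

/-- `u` is `N`-cyclically monotone on `Ω`: for every cycle `x 1, …, x N, x (N+1) = x 1`
of points of `Ω`, `∑_{i=1}^{N} ⟨u (x i), x i - x (i+1)⟩ ≥ 0`. -/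
def NCyclicallyMonotone (N : ℕ) {d : ℕ} (Ω : Set (Ed d)) (u : Ed d → Ed d) : Prop :=
  ∀ x : ℕ → Ed d,
    (∀ i, 1 ≤ i → i ≤ N → x i ∈ Ω) → x (N + 1) = x 1 →
    0 ≤ ∑ i ∈ Icc 1 N, ⟪u (x i), x i - x (i + 1)⟫

/-- The concavification, with respect to the last `N-1` variables, of a function
`K : Ω^N → ℝ`, evaluated at `x = (x₁,…,x_N)`:
`sup { ∑ λₖ K(x₁, y₂ᵏ, …, y_Nᵏ) : λₖ ≥ 0, ∑ λₖ = 1, yᵢᵏ ∈ Ω, ∑ₖ λₖ (y₂ᵏ,…,y_Nᵏ) = (x₂,…,x_N) }`. -/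
def concavify₂N (N : ℕ) {d : ℕ} [NeZero N] (Ω : Set (Ed d)) (K : (Fin N → Ed d) → ℝ)
    (x : Fin N → Ed d) : ℝ :=
  sSup {r : ℝ | ∃ n : ℕ, ∃ lam : Fin n → ℝ, ∃ y : Fin n → (Fin N → Ed d),
    (∀ k, 0 ≤ lam k) ∧ (∑ k, lam k = 1) ∧
    (∀ k, ∀ i : Fin N, y k i ∈ Ω) ∧
    (∀ k, y k 0 = x 0) ∧
    (∀ i : Fin N, i ≠ 0 → ∑ k, lam k • y k i = x i) ∧
    r = ∑ k, lam k * K (y k)}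

section GG
variable {d : ℕ} {N : ℕ} [NeZero N]
open Fin.NatCast Fin.CommRing

lemma GG.cyc_apply (x : Fin N → Ed d) (i : Fin N) : cyc x i = x (i + 1) := by
  obtain ⟨n, rfl⟩ := Nat.exists_eq_succ_of_ne_zero (NeZero.ne N)
  simp [cyc, finRotate_succ_apply]

lemma GG.cyc_iter_apply (j : ℕ) (x : Fin N → Ed d) (i : Fin N) :
    (cyc^[j] x) i = x (i + (j : Fin N)) := by
  induction j generalizing x with
  | zero => simp
  | succ j ih =>
    rw [Function.iterate_succ_apply, ih (cyc x), GG.cyc_apply]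
    congr 1
    push_cast
    ring

lemma GG.cyc_iter_eq (j : ℕ) (x : Fin N → Ed d) :
    cyc^[j] x = fun i => x (i + (j : Fin N)) := funext fun i => GG.cyc_iter_apply j x i

lemma GG.cyc_iter_mem {Ω : Set (Ed d)} {x : Fin N → Ed d} (hx : ∀ i, x i ∈ Ω) (j : ℕ) :
    ∀ i, (cyc^[j] x) i ∈ Ω := fun i => by rw [GG.cyc_iter_apply]; exact hx _

lemma GG.cyc_iter_const (j : ℕ) (a : Ed d) : cyc^[j] (fun _ : Fin N => a) = fun _ => a := by
  funext i; rw [GG.cyc_iter_apply]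

/-- sum over the cyclic orbit, as sum over `Fin N` of shifts. -/
lemma GG.orbit_sum (H : (Fin N → Ed d) → ℝ) (x : Fin N → Ed d) :
    ∑ i ∈ range N, H (cyc^[i] x) = ∑ k : Fin N, H (fun t => x (t + k)) := by
  rw [← Fin.sum_univ_eq_sum_range (fun i => H (cyc^[i] x)) N]
  refine Finset.sum_congr rfl fun k _ => ?_
  rw [GG.cyc_iter_eq]
  simp

lemma GG.orbit_sum_shift (H : (Fin N → Ed d) → ℝ) (x : Fin N → Ed d) (j : ℕ) :
    ∑ i ∈ range N, H (cyc^[i] (cyc^[j] x)) = ∑ i ∈ range N, H (cyc^[i] x) := by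
  rw [GG.orbit_sum, GG.orbit_sum]
  have : ∀ k : Fin N, (fun t => (cyc^[j] x) (t + k)) = fun t => x (t + (k + (j : Fin N))) := by
    intro k; funext t; rw [GG.cyc_iter_apply]; congr 1; ring
  calc ∑ k : Fin N, H (fun t => (cyc^[j] x) (t + k))
      = ∑ k : Fin N, (fun m => H (fun t => x (t + m))) ((Equiv.addRight ((j : Fin N))) k) := by
        refine Finset.sum_congr rfl fun k _ => ?_
        rw [this k]; rfl
    _ = ∑ k : Fin N, H (fun t => x (t + k)) :=
        Equiv.sum_comp (Equiv.addRight ((j : Fin N))) (fun m => H (fun t => x (t + m)))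


/-- `Kf H = ∑_{i=1}^{N-1} H ∘ σ^i`. -/
def GG.Kf (H : (Fin N → Ed d) → ℝ) (x : Fin N → Ed d) : ℝ :=
  ∑ i ∈ Icc 1 (N - 1), H (cyc^[i] x)

def GG.base (u : ℕ → Ed d → Ed d) (x : Fin N → Ed d) : ℝ :=
  ∑ ℓ ∈ Icc 1 (N - 1), ⟪u ℓ (x 0), x ((ℓ : ℕ) : Fin N) - x 0⟫

lemma GG.range_split (f : ℕ → ℝ) :
    ∑ i ∈ range N, f i = f 0 + ∑ i ∈ Icc 1 (N - 1), f i := by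
  have hN : 1 ≤ N := Nat.one_le_iff_ne_zero.2 (NeZero.ne N)
  have h1 : Icc 1 (N - 1) = Ico 1 N := by
    have : N - 1 + 1 = N := by omega
    rw [← Finset.Ico_add_one_right_eq_Icc, this]
  rw [h1, Finset.range_eq_Ico, Finset.sum_eq_sum_Ico_succ_bot hN]

/-- split of the orbit sum -/
lemma GG.orbit_split (H : (Fin N → Ed d) → ℝ) (x : Fin N → Ed d) :
    ∑ i ∈ range N, H (cyc^[i] x) = H x + GG.Kf H x := by
  rw [GG.range_split (fun i => H (cyc^[i] x))]
  simp [GG.Kf]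

/-- The key telescoping identity: `∑_{j<N} Kf H (σ^j x) = (N-1) ∑_{j<N} H (σ^j x)`. -/
lemma GG.Kf_cycle_sum (H : (Fin N → Ed d) → ℝ) (x : Fin N → Ed d) :
    ∑ j ∈ range N, GG.Kf H (cyc^[j] x)
      = ((N : ℝ) - 1) * ∑ j ∈ range N, H (cyc^[j] x) := by
  have hN : 1 ≤ N := Nat.one_le_iff_ne_zero.2 (NeZero.ne N)
  have : ∑ j ∈ range N, GG.Kf H (cyc^[j] x)
      = ∑ i ∈ Icc 1 (N - 1), ∑ j ∈ range N, H (cyc^[i] (cyc^[j] x)) := by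
    rw [Finset.sum_comm]
    rfl
  rw [this]
  have h2 : ∀ i ∈ Icc 1 (N - 1), ∑ j ∈ range N, H (cyc^[i] (cyc^[j] x))
      = ∑ j ∈ range N, H (cyc^[j] x) := by
    intro i _
    calc ∑ j ∈ range N, H (cyc^[i] (cyc^[j] x))
        = ∑ j ∈ range N, H (cyc^[j] (cyc^[i] x)) := by
          refine Finset.sum_congr rfl fun j _ => ?_
          rw [← Function.iterate_add_apply, ← Function.iterate_add_apply, Nat.add_comm]
      _ = ∑ j ∈ range N, H (cyc^[j] x) := GG.orbit_sum_shift H x i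
  rw [Finset.sum_congr rfl h2, Finset.sum_const, Nat.card_Icc]
  have : (N - 1 + 1 - 1 : ℕ) = N - 1 := by omega
  rw [this, nsmul_eq_mul, Nat.cast_sub hN, Nat.cast_one]

lemma GG.cast_ne_zero {ℓ : ℕ} (h1 : 1 ≤ ℓ) (h2 : ℓ ≤ N - 1) : ((ℓ : ℕ) : Fin N) ≠ 0 := by
  have hN : 1 ≤ N := Nat.one_le_iff_ne_zero.2 (NeZero.ne N)
  have hlt : ℓ < N := by omega
  intro h
  have : ((ℓ : ℕ) : Fin N).val = 0 := by rw [h]; rfl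
  rw [Fin.val_natCast, Nat.mod_eq_of_lt hlt] at this
  omega

/-- Joint N-monotonicity means `base` is N-sub-antisymmetric. -/
lemma GG.base_subanti {Ω : Set (Ed d)} {u : ℕ → Ed d → Ed d}
    (hmono : JointlyNMonotone N Ω u) {x : Fin N → Ed d} (hx : ∀ i, x i ∈ Ω) :
    ∑ i ∈ range N, GG.base u (cyc^[i] x) ≤ 0 := by
  have hN : 1 ≤ N := Nat.one_le_iff_ne_zero.2 (NeZero.ne N)
  set xt : ℕ → Ed d := fun i => x (((i - 1 : ℕ) : ℕ) : Fin N) with hxt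
  have h1 := hmono xt (fun i _ _ => hx _) ?_
  · -- translate the double sum
    have key : ∑ i ∈ Icc 1 N, ∑ ℓ ∈ Icc 1 (N - 1), ⟪u ℓ (xt i), xt i - xt (i + ℓ)⟫
        = - ∑ j ∈ range N, GG.base u (cyc^[j] x) := by
      have hIcc : Icc 1 N = Ico 1 (N + 1) := by rw [Finset.Ico_add_one_right_eq_Icc]
      rw [hIcc, Finset.sum_Ico_eq_sum_range]
      have : N + 1 - 1 = N := by omega
      rw [this, ← Finset.sum_neg_distrib]
      refine Finset.sum_congr rfl fun j _ => ?_
      rw [GG.base, ← Finset.sum_neg_distrib]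
      refine Finset.sum_congr rfl fun ℓ hℓ => ?_
      simp only [Finset.mem_Icc] at hℓ
      have e0 : xt (1 + j) = x ((j : ℕ) : Fin N) := by
        have hj : 1 + j - 1 = j := by omega
        simp only [hxt]
        rw [hj]
      have e1 : xt (1 + j + ℓ) = x (((j + ℓ : ℕ) : ℕ) : Fin N) := by
        have hj : 1 + j + ℓ - 1 = j + ℓ := by omega
        simp only [hxt]
        rw [hj]
      have e2 : (cyc^[j] x) 0 = x ((j : ℕ) : Fin N) := by
        rw [GG.cyc_iter_apply, zero_add]
      have e3 : (cyc^[j] x) ((ℓ : ℕ) : Fin N) = x (((j + ℓ : ℕ) : ℕ) : Fin N) := by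
        have : ((j + ℓ : ℕ) : Fin N) = ((ℓ : ℕ) : Fin N) + ((j : ℕ) : Fin N) := by
          push_cast; ring
        rw [GG.cyc_iter_apply, this]
      rw [e0, e1, e2, e3]
      rw [← inner_neg_right]
      congr 1
      abel
    rw [key] at h1
    linarith
  · intro i hi1 hi2
    simp only [hxt]
    congr 1
    have : N + i - 1 = (i - 1) + N := by omega
    rw [this]
    push_cast
    simp [Fin.natCast_self]


/-- the set whose sup is the concavification of `Kf H` in the last `N-1` variables -/
def GG.SetD (Ω : Set (Ed d)) (H : (Fin N → Ed d) → ℝ) (x : Fin N → Ed d) : Set ℝ :=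
  {r : ℝ | ∃ n : ℕ, ∃ lam : Fin n → ℝ, ∃ y : Fin n → (Fin N → Ed d),
    (∀ k, 0 ≤ lam k) ∧ (∑ k, lam k = 1) ∧
    (∀ k, ∀ i : Fin N, y k i ∈ Ω) ∧
    (∀ k, y k 0 = x 0) ∧
    (∀ i : Fin N, i ≠ 0 → ∑ k, lam k • y k i = x i) ∧
    r = ∑ k, lam k * GG.Kf H (y k)}

lemma GG.setD_self {Ω : Set (Ed d)} (H : (Fin N → Ed d) → ℝ) {x : Fin N → Ed d}
    (hx : ∀ i, x i ∈ Ω) : GG.Kf H x ∈ GG.SetD Ω H x := by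
  refine ⟨1, fun _ => 1, fun _ => x, fun _ => zero_le_one, by simp, fun _ i => hx i,
    fun _ => rfl, fun i _ => by simp, by simp⟩

lemma GG.setD_le {Ω : Set (Ed d)} {H : (Fin N → Ed d) → ℝ}
    (hsub : ∀ x : Fin N → Ed d, (∀ i, x i ∈ Ω) → ∑ i ∈ range N, H (cyc^[i] x) ≤ 0)
    (hconv : ∀ x₁ ∈ Ω, ConvexOn ℝ {y : Fin N → Ed d | ∀ i, y i ∈ Ω}
      (fun y => H (Function.update y 0 x₁)))
    {x : Fin N → Ed d} (hx : ∀ i, x i ∈ Ω) :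
    ∀ r ∈ GG.SetD Ω H x, r ≤ -H x := by
  rintro r ⟨n, lam, y, hpos, hsum, hmem, h0, havg, rfl⟩
  have step1 : ∀ k, GG.Kf H (y k) ≤ -H (y k) := by
    intro k
    have := hsub (y k) (hmem k)
    rw [GG.orbit_split] at this
    linarith
  have step2 : ∑ k, lam k * GG.Kf H (y k) ≤ ∑ k, lam k * (-H (y k)) :=
    Finset.sum_le_sum fun k _ => mul_le_mul_of_nonneg_left (step1 k) (hpos k)
  have hxsum : x = ∑ k, lam k • y k := by
    funext i
    rw [Finset.sum_apply]
    by_cases hi : i = 0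
    · subst hi
      have : ∀ k : Fin n, (lam k • y k) 0 = lam k • x 0 := fun k => by
        show lam k • (y k 0) = lam k • x 0
        rw [h0 k]
      rw [Finset.sum_congr rfl fun k _ => this k, ← Finset.sum_smul, hsum, one_smul]
    · have := havg i hi
      rw [← this]
      rfl
  have jensen : H x ≤ ∑ k, lam k * H (y k) := by
    have hcx := hconv (x 0) (hx 0)
    have happ := hcx.map_sum_le (t := Finset.univ) (w := lam) (p := y)
      (fun k _ => hpos k) hsum (fun k _ => hmem k)
    have e1 : Function.update (∑ k, lam k • y k) 0 (x 0) = x := by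
      rw [← hxsum]; exact Function.update_eq_self 0 x
    have e2 : ∀ k : Fin n, Function.update (y k) 0 (x 0) = y k := by
      intro k; rw [← h0 k]; exact Function.update_eq_self 0 (y k)
    rw [e1] at happ
    refine happ.trans_eq ?_
    exact Finset.sum_congr rfl fun k _ => by rw [e2 k, smul_eq_mul]
  have e3 : ∑ k, lam k * (-H (y k)) = -∑ k, lam k * H (y k) := by
    rw [← Finset.sum_neg_distrib]
    exact Finset.sum_congr rfl fun k _ => by ring
  rw [e3] at step2
  linarith

lemma GG.setD_nonempty {Ω : Set (Ed d)} (H : (Fin N → Ed d) → ℝ) {x : Fin N → Ed d}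
    (hx : ∀ i, x i ∈ Ω) : (GG.SetD Ω H x).Nonempty := ⟨_, GG.setD_self H hx⟩

lemma GG.setD_bdd {Ω : Set (Ed d)} {H : (Fin N → Ed d) → ℝ}
    (hsub : ∀ x : Fin N → Ed d, (∀ i, x i ∈ Ω) → ∑ i ∈ range N, H (cyc^[i] x) ≤ 0)
    (hconv : ∀ x₁ ∈ Ω, ConvexOn ℝ {y : Fin N → Ed d | ∀ i, y i ∈ Ω}
      (fun y => H (Function.update y 0 x₁)))
    {x : Fin N → Ed d} (hx : ∀ i, x i ∈ Ω) : BddAbove (GG.SetD Ω H x) :=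
  ⟨-H x, fun r hr => GG.setD_le hsub hconv hx r hr⟩

lemma GG.S_convex {Ω : Set (Ed d)} (hΩ : Convex ℝ Ω) :
    Convex ℝ {y : Fin N → Ed d | ∀ i, y i ∈ Ω} := by
  intro y hy w hw a b ha hb hab i
  exact hΩ (hy i) (hw i) ha hb hab

/-- bounds for the value of `-sSup (SetD)` -/
lemma GG.sSup_bounds {Ω : Set (Ed d)} {H : (Fin N → Ed d) → ℝ}
    (hsub : ∀ x : Fin N → Ed d, (∀ i, x i ∈ Ω) → ∑ i ∈ range N, H (cyc^[i] x) ≤ 0)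
    (hconv : ∀ x₁ ∈ Ω, ConvexOn ℝ {y : Fin N → Ed d | ∀ i, y i ∈ Ω}
      (fun y => H (Function.update y 0 x₁)))
    {x : Fin N → Ed d} (hx : ∀ i, x i ∈ Ω) :
    H x ≤ -sSup (GG.SetD Ω H x) ∧ -sSup (GG.SetD Ω H x) ≤ -GG.Kf H x := by
  constructor
  · have : sSup (GG.SetD Ω H x) ≤ -H x :=
      csSup_le (GG.setD_nonempty H hx) (fun r hr => GG.setD_le hsub hconv hx r hr)
    linarith
  · have : GG.Kf H x ≤ sSup (GG.SetD Ω H x) :=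
      le_csSup (GG.setD_bdd hsub hconv hx) (GG.setD_self H hx)
    linarith


/-- concavity (in the last `N-1` variables, jointly) of `y ↦ sSup (SetD (update y 0 x₁))` -/
lemma GG.sSup_convlast {Ω : Set (Ed d)} (hΩconv : Convex ℝ Ω) {H : (Fin N → Ed d) → ℝ}
    (hsub : ∀ x : Fin N → Ed d, (∀ i, x i ∈ Ω) → ∑ i ∈ range N, H (cyc^[i] x) ≤ 0)
    (hconv : ∀ x₁ ∈ Ω, ConvexOn ℝ {y : Fin N → Ed d | ∀ i, y i ∈ Ω}
      (fun y => H (Function.update y 0 x₁)))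
    {x₁ : Ed d} (hx₁ : x₁ ∈ Ω) :
    ConvexOn ℝ {y : Fin N → Ed d | ∀ i, y i ∈ Ω}
      (fun y => -sSup (GG.SetD Ω H (Function.update y 0 x₁))) := by
  refine ⟨GG.S_convex hΩconv, ?_⟩
  intro y hy w hw a b ha hb hab
  dsimp only
  have hyS : ∀ i, Function.update y 0 x₁ i ∈ Ω := by
    intro i
    by_cases hi : i = 0
    · subst hi; rw [Function.update_self]; exact hx₁
    · rw [Function.update_of_ne hi]; exact hy i
  have hwS : ∀ i, Function.update w 0 x₁ i ∈ Ω := by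
    intro i
    by_cases hi : i = 0
    · subst hi; rw [Function.update_self]; exact hx₁
    · rw [Function.update_of_ne hi]; exact hw i
  have hcS : ∀ i, Function.update (a • y + b • w) 0 x₁ i ∈ Ω := by
    intro i
    by_cases hi : i = 0
    · subst hi; rw [Function.update_self]; exact hx₁
    · rw [Function.update_of_ne hi]
      exact hΩconv (hy i) (hw i) ha hb hab
  -- suffices : a * Sy + b * Sw ≤ Sc
  rw [smul_eq_mul, smul_eq_mul]
  have key : a * sSup (GG.SetD Ω H (Function.update y 0 x₁))
      + b * sSup (GG.SetD Ω H (Function.update w 0 x₁))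
      ≤ sSup (GG.SetD Ω H (Function.update (a • y + b • w) 0 x₁)) := by
    refine le_of_forall_pos_le_add fun ε hε => ?_
    obtain ⟨r₁, hr₁mem, hr₁⟩ := exists_lt_of_lt_csSup (GG.setD_nonempty H hyS)
      (sub_lt_self _ hε : sSup (GG.SetD Ω H (Function.update y 0 x₁)) - ε < _)
    obtain ⟨r₂, hr₂mem, hr₂⟩ := exists_lt_of_lt_csSup (GG.setD_nonempty H hwS)
      (sub_lt_self _ hε : sSup (GG.SetD Ω H (Function.update w 0 x₁)) - ε < _)
    obtain ⟨n, lam, yy, hpos, hsum, hmem, h0, havg, rfl⟩ := hr₁mem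
    obtain ⟨m, mu, ww, hpos', hsum', hmem', h0', havg', rfl⟩ := hr₂mem
    -- merged combination
    set lam' : Fin (n + m) → ℝ := Fin.addCases (fun k => a * lam k) (fun k => b * mu k)
      with hlam'
    set yy' : Fin (n + m) → (Fin N → Ed d) := Fin.addCases yy ww with hyy'
    have hmerge : a * (∑ k, lam k * GG.Kf H (yy k)) + b * (∑ k, mu k * GG.Kf H (ww k))
        ∈ GG.SetD Ω H (Function.update (a • y + b • w) 0 x₁) := by
      refine ⟨n + m, lam', yy', ?_, ?_, ?_, ?_, ?_, ?_⟩
      · intro k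
        refine Fin.addCases (motive := fun k => 0 ≤ lam' k) ?_ ?_ k
        · intro k₁; simp only [hlam', Fin.addCases_left]; exact mul_nonneg ha (hpos k₁)
        · intro k₂; simp only [hlam', Fin.addCases_right]; exact mul_nonneg hb (hpos' k₂)
      · rw [Fin.sum_univ_add]
        simp only [hlam', Fin.addCases_left, Fin.addCases_right]
        rw [← Finset.mul_sum, ← Finset.mul_sum, hsum, hsum', mul_one, mul_one, hab]
      · intro k i
        refine Fin.addCases (motive := fun k => yy' k i ∈ Ω) ?_ ?_ k
        · intro k₁; simp only [hyy', Fin.addCases_left]; exact hmem k₁ i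
        · intro k₂; simp only [hyy', Fin.addCases_right]; exact hmem' k₂ i
      · intro k
        refine Fin.addCases (motive := fun k => yy' k 0 = Function.update (a • y + b • w) 0 x₁ 0) ?_ ?_ k
        · intro k₁
          simp only [hyy', Fin.addCases_left]
          rw [h0 k₁]
          simp
        · intro k₂
          simp only [hyy', Fin.addCases_right]
          rw [h0' k₂]
          simp
      · intro i hi
        rw [Fin.sum_univ_add]
        simp only [hlam', hyy', Fin.addCases_left, Fin.addCases_right]
        have e1 : ∀ k : Fin n, (a * lam k) • yy k i = a • (lam k • yy k i) := fun k => by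
          rw [mul_smul]
        have e2 : ∀ k : Fin m, (b * mu k) • ww k i = b • (mu k • ww k i) := fun k => by
          rw [mul_smul]
        rw [Finset.sum_congr rfl fun k _ => e1 k, Finset.sum_congr rfl fun k _ => e2 k,
          ← Finset.smul_sum, ← Finset.smul_sum, havg i hi, havg' i hi,
          Function.update_of_ne hi, Function.update_of_ne hi, Function.update_of_ne hi]
        rfl
      · rw [Fin.sum_univ_add]
        simp only [hlam', hyy', Fin.addCases_left, Fin.addCases_right]
        rw [Finset.mul_sum, Finset.mul_sum]
        congr 1 <;> · refine Finset.sum_congr rfl fun k _ => by ring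
    have hle := le_csSup (GG.setD_bdd hsub hconv hcS) hmerge
    have h1 : a * (sSup (GG.SetD Ω H (Function.update y 0 x₁)) - ε)
        ≤ a * (∑ k, lam k * GG.Kf H (yy k)) := mul_le_mul_of_nonneg_left hr₁.le ha
    have h2 : b * (sSup (GG.SetD Ω H (Function.update w 0 x₁)) - ε)
        ≤ b * (∑ k, mu k * GG.Kf H (ww k)) := mul_le_mul_of_nonneg_left hr₂.le hb
    nlinarith [hab]
  have e : a * -sSup (GG.SetD Ω H (Function.update y 0 x₁))
      + b * -sSup (GG.SetD Ω H (Function.update w 0 x₁))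
      = -(a * sSup (GG.SetD Ω H (Function.update y 0 x₁))
        + b * sSup (GG.SetD Ω H (Function.update w 0 x₁))) := by ring
  rw [e]
  linarith


lemma GG.update_mem {Ω : Set (Ed d)} {x : Fin N → Ed d} (hx : ∀ i, x i ∈ Ω)
    {z : Ed d} (hz : z ∈ Ω) : ∀ i, Function.update x 0 z i ∈ Ω := by
  intro i
  by_cases hi : i = 0
  · subst hi; rw [Function.update_self]; exact hz
  · rw [Function.update_of_ne hi]; exact hx i

/-- convexity (in the first variable) of `z ↦ sSup (SetD (update x 0 z))` -/
lemma GG.sSup_convfirst {Ω : Set (Ed d)} (hΩconv : Convex ℝ Ω) {H : (Fin N → Ed d) → ℝ}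
    (hsub : ∀ x : Fin N → Ed d, (∀ i, x i ∈ Ω) → ∑ i ∈ range N, H (cyc^[i] x) ≤ 0)
    (hconv : ∀ x₁ ∈ Ω, ConvexOn ℝ {y : Fin N → Ed d | ∀ i, y i ∈ Ω}
      (fun y => H (Function.update y 0 x₁)))
    {x : Fin N → Ed d} (hx : ∀ i, x i ∈ Ω) :
    ConvexOn ℝ Ω (fun z => sSup (GG.SetD Ω H (Function.update x 0 z))) := by
  refine ⟨hΩconv, ?_⟩
  intro p hp q hq a b ha hb hab
  dsimp only
  have hcmem : a • p + b • q ∈ Ω := hΩconv hp hq ha hb hab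
  refine csSup_le (GG.setD_nonempty H (GG.update_mem hx hcmem)) ?_
  rintro r ⟨n, lam, y, hpos, hsum, hmem, h0, havg, rfl⟩
  have h0' : ∀ k, y k 0 = a • p + b • q := by
    intro k; rw [h0 k, Function.update_self]
  set ya : Fin n → (Fin N → Ed d) := fun k => Function.update (y k) 0 p with hya
  set yb : Fin n → (Fin N → Ed d) := fun k => Function.update (y k) 0 q with hyb
  have hyamem : ∀ k i, ya k i ∈ Ω := fun k => GG.update_mem (hmem k) hp
  have hybmem : ∀ k i, yb k i ∈ Ω := fun k => GG.update_mem (hmem k) hq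
  -- key slot-convexity estimate
  have key : ∀ k, GG.Kf H (y k) ≤ a * GG.Kf H (ya k) + b * GG.Kf H (yb k) := by
    intro k
    have hterm : ∀ i ∈ Icc 1 (N - 1),
        H (cyc^[i] (y k)) ≤ a * H (cyc^[i] (ya k)) + b * H (cyc^[i] (yb k)) := by
      intro i hi
      simp only [Finset.mem_Icc] at hi
      have hne : ((i : ℕ) : Fin N) ≠ 0 := GG.cast_ne_zero hi.1 hi.2
      set c0 : Ed d := y k ((i : ℕ) : Fin N) with hc0
      have hc0mem : c0 ∈ Ω := hmem k _
      have hcx := hconv c0 hc0mem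
      set A := cyc^[i] (ya k) with hA
      set B := cyc^[i] (yb k) with hB
      have hAmem : A ∈ {y : Fin N → Ed d | ∀ i, y i ∈ Ω} := GG.cyc_iter_mem (hyamem k) i
      have hBmem : B ∈ {y : Fin N → Ed d | ∀ i, y i ∈ Ω} := GG.cyc_iter_mem (hybmem k) i
      have hcomb : a • A + b • B = cyc^[i] (y k) := by
        funext t
        show a • A t + b • B t = _
        rw [hA, hB, GG.cyc_iter_apply, GG.cyc_iter_apply, GG.cyc_iter_apply]
        by_cases ht : t + ((i : ℕ) : Fin N) = 0
        · rw [ht]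
          show a • (Function.update (y k) 0 p 0) + b • (Function.update (y k) 0 q 0) = y k 0
          rw [Function.update_self, Function.update_self, h0' k]
        · show a • (Function.update (y k) 0 p _) + b • (Function.update (y k) 0 q _) = _
          rw [Function.update_of_ne ht, Function.update_of_ne ht, ← add_smul, hab, one_smul]
      have happ := hcx.2 hAmem hBmem ha hb hab
      dsimp only at happ
      rw [hcomb] at happ
      have eA0 : A 0 = c0 := by
        rw [hA, GG.cyc_iter_apply, zero_add, hya]
        exact Function.update_of_ne hne _ _
      have eB0 : B 0 = c0 := by
        rw [hB, GG.cyc_iter_apply, zero_add, hyb]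
        exact Function.update_of_ne hne _ _
      have eY0 : (cyc^[i] (y k)) 0 = c0 := by rw [GG.cyc_iter_apply, zero_add]
      have e1 : Function.update (cyc^[i] (y k)) 0 c0 = cyc^[i] (y k) := by
        rw [← eY0]; exact Function.update_eq_self _ _
      have e2 : Function.update A 0 c0 = A := by
        rw [← eA0]; exact Function.update_eq_self _ _
      have e3 : Function.update B 0 c0 = B := by
        rw [← eB0]; exact Function.update_eq_self _ _
      rw [e1, e2, e3] at happ
      simpa using happ
    calc GG.Kf H (y k) ≤ ∑ i ∈ Icc 1 (N - 1),
          (a * H (cyc^[i] (ya k)) + b * H (cyc^[i] (yb k))) := Finset.sum_le_sum hterm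
      _ = a * GG.Kf H (ya k) + b * GG.Kf H (yb k) := by
          rw [Finset.sum_add_distrib, GG.Kf, GG.Kf, Finset.mul_sum, Finset.mul_sum]
  -- memberships of the two projected combinations
  have hmemA : ∑ k, lam k * GG.Kf H (ya k) ∈ GG.SetD Ω H (Function.update x 0 p) := by
    refine ⟨n, lam, ya, hpos, hsum, hyamem, ?_, ?_, rfl⟩
    · intro k; rw [hya]; simp
    · intro i hi
      have : ∀ k : Fin n, lam k • ya k i = lam k • y k i := by
        intro k; rw [hya]; simp [Function.update_of_ne hi]
      rw [Finset.sum_congr rfl fun k _ => this k, havg i hi,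
        Function.update_of_ne hi, Function.update_of_ne hi]
  have hmemB : ∑ k, lam k * GG.Kf H (yb k) ∈ GG.SetD Ω H (Function.update x 0 q) := by
    refine ⟨n, lam, yb, hpos, hsum, hybmem, ?_, ?_, rfl⟩
    · intro k; rw [hyb]; simp
    · intro i hi
      have : ∀ k : Fin n, lam k • yb k i = lam k • y k i := by
        intro k; rw [hyb]; simp [Function.update_of_ne hi]
      rw [Finset.sum_congr rfl fun k _ => this k, havg i hi,
        Function.update_of_ne hi, Function.update_of_ne hi]
  have hA' : ∑ k, lam k * GG.Kf H (ya k) ≤ sSup (GG.SetD Ω H (Function.update x 0 p)) :=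
    le_csSup (GG.setD_bdd hsub hconv (GG.update_mem hx hp)) hmemA
  have hB' : ∑ k, lam k * GG.Kf H (yb k) ≤ sSup (GG.SetD Ω H (Function.update x 0 q)) :=
    le_csSup (GG.setD_bdd hsub hconv (GG.update_mem hx hq)) hmemB
  have step : ∑ k, lam k * GG.Kf H (y k)
      ≤ a * ∑ k, lam k * GG.Kf H (ya k) + b * ∑ k, lam k * GG.Kf H (yb k) := by
    calc ∑ k, lam k * GG.Kf H (y k)
        ≤ ∑ k, lam k * (a * GG.Kf H (ya k) + b * GG.Kf H (yb k)) :=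
          Finset.sum_le_sum fun k _ => mul_le_mul_of_nonneg_left (key k) (hpos k)
      _ = a * ∑ k, lam k * GG.Kf H (ya k) + b * ∑ k, lam k * GG.Kf H (yb k) := by
          rw [Finset.mul_sum, Finset.mul_sum, ← Finset.sum_add_distrib]
          refine Finset.sum_congr rfl fun k _ => by ring
  have h1 := mul_le_mul_of_nonneg_left hA' ha
  have h2 := mul_le_mul_of_nonneg_left hB' hb
  calc ∑ k, lam k * GG.Kf H (y k)
      ≤ a * ∑ k, lam k * GG.Kf H (ya k) + b * ∑ k, lam k * GG.Kf H (yb k) := step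
    _ ≤ a • sSup (GG.SetD Ω H (Function.update x 0 p))
        + b • sSup (GG.SetD Ω H (Function.update x 0 q)) := by
        rw [smul_eq_mul, smul_eq_mul]; exact add_le_add h1 h2



lemma GG.convexOn_congr {E : Type*} [AddCommGroup E] [Module ℝ E] {s : Set E}
    {f g : E → ℝ} (hfg : ∀ y ∈ s, f y = g y) (hf : ConvexOn ℝ s f) : ConvexOn ℝ s g := by
  refine ⟨hf.1, fun y hy w hw a b ha hb hab => ?_⟩
  rw [← hfg _ (hf.1 hy hw ha hb hab), ← hfg _ hy, ← hfg _ hw]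
  exact hf.2 hy hw ha hb hab

lemma GG.concaveOn_congr {E : Type*} [AddCommGroup E] [Module ℝ E] {s : Set E}
    {f g : E → ℝ} (hfg : ∀ y ∈ s, f y = g y) (hf : ConcaveOn ℝ s f) : ConcaveOn ℝ s g := by
  refine ⟨hf.1, fun y hy w hw a b ha hb hab => ?_⟩
  rw [← hfg _ (hf.1 hy hw ha hb hab), ← hfg _ hy, ← hfg _ hw]
  exact hf.2 hy hw ha hb hab

/-- the concavification vanishes on the diagonal -/
lemma GG.sSup_diag {Ω : Set (Ed d)} {H : (Fin N → Ed d) → ℝ}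
    (hsub : ∀ x : Fin N → Ed d, (∀ i, x i ∈ Ω) → ∑ i ∈ range N, H (cyc^[i] x) ≤ 0)
    (hconv : ∀ x₁ ∈ Ω, ConvexOn ℝ {y : Fin N → Ed d | ∀ i, y i ∈ Ω}
      (fun y => H (Function.update y 0 x₁)))
    (hdiag : ∀ z ∈ Ω, H (fun _ => z) = 0) {z : Ed d} (hz : z ∈ Ω) :
    sSup (GG.SetD Ω H (fun _ => z)) = 0 := by
  have hconstS : ∀ i, (fun _ : Fin N => z) i ∈ Ω := fun _ => hz
  have hKf0 : GG.Kf H (fun _ : Fin N => z) = 0 := by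
    refine Finset.sum_eq_zero fun i _ => ?_
    rw [GG.cyc_iter_const]
    exact hdiag z hz
  refine le_antisymm (csSup_le (GG.setD_nonempty H hconstS) ?_) ?_
  · intro r hr
    have := GG.setD_le hsub hconv hconstS r hr
    rw [hdiag z hz] at this
    simpa using this
  · rw [← hKf0]
    exact le_csSup (GG.setD_bdd hsub hconv hconstS) (GG.setD_self H hconstS)

/-- the admissible class of Hamiltonians -/
structure GG.Good (Ω : Set (Ed d)) (u : ℕ → Ed d → Ed d) (H : (Fin N → Ed d) → ℝ) : Prop where
  zero_off : ∀ x : Fin N → Ed d, ¬ (∀ i, x i ∈ Ω) → H x = 0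
  ge_base : ∀ x : Fin N → Ed d, (∀ i, x i ∈ Ω) → GG.base u x ≤ H x
  le_ub : ∀ x : Fin N → Ed d, (∀ i, x i ∈ Ω) → H x ≤ -GG.Kf (GG.base u) x
  subanti : ∀ x : Fin N → Ed d, (∀ i, x i ∈ Ω) → ∑ i ∈ range N, H (cyc^[i] x) ≤ 0
  diag : ∀ z ∈ Ω, H (fun _ => z) = 0
  convlast : ∀ x₁ ∈ Ω, ConvexOn ℝ {y : Fin N → Ed d | ∀ i, y i ∈ Ω}
    (fun y => H (Function.update y 0 x₁))

def GG.blo (Ω : Set (Ed d)) (u : ℕ → Ed d → Ed d) : (Fin N → Ed d) → ℝ :=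
  Set.indicator {x : Fin N → Ed d | ∀ i, x i ∈ Ω} (GG.base u)

lemma GG.good_blo {Ω : Set (Ed d)} {u : ℕ → Ed d → Ed d} (hΩconv : Convex ℝ Ω)
    (hmono : JointlyNMonotone N Ω u) : GG.Good Ω u (GG.blo (N := N) Ω u) := by
  classical
  constructor
  · intro x hx
    have hx' : x ∉ {x : Fin N → Ed d | ∀ i, x i ∈ Ω} := hx
    exact Set.indicator_of_notMem hx' _
  · intro x hx
    have hx' : x ∈ {x : Fin N → Ed d | ∀ i, x i ∈ Ω} := hx
    have e : GG.blo (N := N) Ω u x = GG.base u x := Set.indicator_of_mem hx' _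
    rw [e]
  · intro x hx
    have h1 := GG.base_subanti hmono hx
    rw [GG.orbit_split] at h1
    have hx' : x ∈ {x : Fin N → Ed d | ∀ i, x i ∈ Ω} := hx
    have e : GG.blo (N := N) Ω u x = GG.base u x := Set.indicator_of_mem hx' _
    rw [e]
    linarith
  · intro x hx
    have : ∀ i ∈ range N, GG.blo (N := N) Ω u (cyc^[i] x) = GG.base u (cyc^[i] x) := by
      intro i _
      have hx' : cyc^[i] x ∈ {x : Fin N → Ed d | ∀ i, x i ∈ Ω} := GG.cyc_iter_mem hx i
      exact Set.indicator_of_mem hx' _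
    rw [Finset.sum_congr rfl this]
    exact GG.base_subanti hmono hx
  · intro z hz
    have hz' : (fun _ : Fin N => z) ∈ {x : Fin N → Ed d | ∀ i, x i ∈ Ω} := fun _ => hz
    have e : GG.blo (N := N) Ω u (fun _ => z) = GG.base u (fun _ => z) := Set.indicator_of_mem hz' _
    rw [e, GG.base]
    refine Finset.sum_eq_zero fun ℓ _ => ?_
    simp
  · intro x₁ hx₁
    refine ⟨GG.S_convex hΩconv, ?_⟩
    intro y hy w hw a b ha hb hab
    dsimp only
    have hyS := GG.update_mem hy hx₁
    have hwS := GG.update_mem hw hx₁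
    have hcS := GG.update_mem (fun i => hΩconv (hy i) (hw i) ha hb hab) hx₁
    have hyS' : Function.update y 0 x₁ ∈ {x : Fin N → Ed d | ∀ i, x i ∈ Ω} := hyS
    have hwS' : Function.update w 0 x₁ ∈ {x : Fin N → Ed d | ∀ i, x i ∈ Ω} := hwS
    have hcS' : Function.update (a • y + b • w) 0 x₁ ∈ {x : Fin N → Ed d | ∀ i, x i ∈ Ω} := hcS
    have e1 : GG.blo (N := N) Ω u (Function.update y 0 x₁) = GG.base u (Function.update y 0 x₁) :=
      Set.indicator_of_mem hyS' _
    have e2 : GG.blo (N := N) Ω u (Function.update w 0 x₁) = GG.base u (Function.update w 0 x₁) :=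
      Set.indicator_of_mem hwS' _
    have e3 : GG.blo (N := N) Ω u (Function.update (a • y + b • w) 0 x₁)
        = GG.base u (Function.update (a • y + b • w) 0 x₁) := Set.indicator_of_mem hcS' _
    rw [e1, e2, e3]
    rw [smul_eq_mul, smul_eq_mul, GG.base, GG.base, GG.base,
      Finset.mul_sum, Finset.mul_sum, ← Finset.sum_add_distrib]
    refine le_of_eq (Finset.sum_congr rfl fun ℓ hℓ => ?_)
    simp only [Finset.mem_Icc] at hℓ
    have hne : ((ℓ : ℕ) : Fin N) ≠ 0 := GG.cast_ne_zero hℓ.1 hℓ.2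
    rw [Function.update_self, Function.update_self, Function.update_self,
      Function.update_of_ne hne, Function.update_of_ne hne, Function.update_of_ne hne]
    have harg : (a • y + b • w) ((ℓ : ℕ) : Fin N) - x₁
        = a • (y ((ℓ : ℕ) : Fin N) - x₁) + b • (w ((ℓ : ℕ) : Fin N) - x₁) := by
      have h1 : a • (y ((ℓ : ℕ) : Fin N) - x₁) + b • (w ((ℓ : ℕ) : Fin N) - x₁)
          = a • y ((ℓ : ℕ) : Fin N) + b • w ((ℓ : ℕ) : Fin N) - (a + b) • x₁ := by module
      rw [hab, one_smul] at h1
      show a • y _ + b • w _ - x₁ = _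
      rw [h1]
    rw [harg, inner_add_right, real_inner_smul_right, real_inner_smul_right]

lemma GG.chain_finite_ub {α : Type*} [Preorder α] {c : Set α} (hc : IsChain (· ≤ ·) c)
    {y : α} (hy : y ∈ c) (f : ℕ → α) (hf : ∀ i, f i ∈ c) (n : ℕ) :
    ∃ m ∈ c, ∀ i < n, f i ≤ m := by
  induction n with
  | zero => exact ⟨y, hy, fun i h => absurd h (Nat.not_lt_zero i)⟩
  | succ n ih =>
    obtain ⟨m, hm, hle⟩ := ih
    rcases hc.total hm (hf n) with h | h
    · refine ⟨f n, hf n, fun i hi => ?_⟩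
      rcases Nat.lt_succ_iff_lt_or_eq.1 hi with h' | h'
      · exact (hle i h').trans h
      · subst h'; exact le_rfl
    · refine ⟨m, hm, fun i hi => ?_⟩
      rcases Nat.lt_succ_iff_lt_or_eq.1 hi with h' | h'
      · exact hle i h'
      · subst h'; exact h

/-- upper bound of a nonempty chain in the admissible class -/
lemma GG.chain_ub {Ω : Set (Ed d)} {u : ℕ → Ed d → Ed d} (hΩconv : Convex ℝ Ω)
    {c : Set ((Fin N → Ed d) → ℝ)} (hcsub : ∀ H ∈ c, GG.Good Ω u H)
    (hc : IsChain (· ≤ ·) c) {y : (Fin N → Ed d) → ℝ} (hy : y ∈ c) :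
    ∃ g, GG.Good Ω u g ∧ ∀ z ∈ c, z ≤ g := by
  classical
  set g : (Fin N → Ed d) → ℝ := fun x => sSup ((fun H => H x) '' c) with hg
  have hne : ∀ x, ((fun H => H x) '' c).Nonempty := fun x => ⟨y x, ⟨y, hy, rfl⟩⟩
  have hbdd : ∀ x, BddAbove ((fun H => H x) '' c) := by
    intro x
    refine ⟨max (-GG.Kf (GG.base u) x) 0, ?_⟩
    rintro v ⟨H, hH, rfl⟩
    by_cases hx : ∀ i, x i ∈ Ω
    · exact le_max_of_le_left ((hcsub H hH).le_ub x hx)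
    · exact le_of_eq_of_le ((hcsub H hH).zero_off x hx) (le_max_right _ _)
  have hub : ∀ z ∈ c, z ≤ g := fun z hz x => le_csSup (hbdd x) ⟨z, hz, rfl⟩
  have hNpos : (0 : ℝ) < N := by
    have : 1 ≤ N := Nat.one_le_iff_ne_zero.2 (NeZero.ne N)
    exact_mod_cast Nat.lt_of_lt_of_le Nat.zero_lt_one this
  refine ⟨g, ?_, hub⟩
  constructor
  · intro x hx
    refine le_antisymm (csSup_le (hne x) ?_) ?_
    · rintro v ⟨H, hH, rfl⟩
      exact le_of_eq ((hcsub H hH).zero_off x hx)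
    · have : (0 : ℝ) ∈ (fun H => H x) '' c := ⟨y, hy, (hcsub y hy).zero_off x hx⟩
      exact le_csSup (hbdd x) this
  · intro x hx
    exact ((hcsub y hy).ge_base x hx).trans (hub y hy x)
  · intro x hx
    refine csSup_le (hne x) ?_
    rintro v ⟨H, hH, rfl⟩
    exact (hcsub H hH).le_ub x hx
  · intro x hx
    refine le_of_forall_pos_le_add fun ε hε => ?_
    have hεN : 0 < ε / N := div_pos hε hNpos
    have hsel : ∀ i : ℕ, ∃ Hc, Hc ∈ c ∧ g (cyc^[i] x) ≤ Hc (cyc^[i] x) + ε / N := by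
      intro i
      obtain ⟨v, ⟨Hc, hHc, rfl⟩, hv⟩ := exists_lt_of_lt_csSup (hne (cyc^[i] x))
        (sub_lt_self _ hεN : g (cyc^[i] x) - ε / N < g (cyc^[i] x))
      exact ⟨Hc, hHc, by linarith⟩
    choose f hfc hfle using hsel
    obtain ⟨m, hmc, hm⟩ := GG.chain_finite_ub hc hy f hfc N
    have step : ∑ i ∈ range N, g (cyc^[i] x) ≤ ∑ i ∈ range N, (m (cyc^[i] x) + ε / N) := by
      refine Finset.sum_le_sum fun i hi => ?_
      refine (hfle i).trans (add_le_add_left ?_ _)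
      exact hm i (Finset.mem_range.1 hi) (cyc^[i] x)
    have step2 : ∑ i ∈ range N, (m (cyc^[i] x) + ε / N)
        = (∑ i ∈ range N, m (cyc^[i] x)) + ε := by
      rw [Finset.sum_add_distrib, Finset.sum_const, Finset.card_range, nsmul_eq_mul]
      congr 1
      field_simp
    have step3 := (hcsub m hmc).subanti x hx
    linarith
  · intro z hz
    refine le_antisymm (csSup_le (hne _) ?_) ?_
    · rintro v ⟨H, hH, rfl⟩
      exact le_of_eq ((hcsub H hH).diag z hz)
    · exact le_csSup (hbdd _) ⟨y, hy, (hcsub y hy).diag z hz⟩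
  · intro x₁ hx₁
    refine ⟨GG.S_convex hΩconv, ?_⟩
    intro yv hyv wv hwv a b ha hb hab
    dsimp only
    refine csSup_le (hne _) ?_
    rintro v ⟨Hc, hHc, rfl⟩
    have h1 := ((hcsub Hc hHc).convlast x₁ hx₁).2 hyv hwv ha hb hab
    dsimp only at h1
    refine h1.trans ?_
    rw [smul_eq_mul, smul_eq_mul, smul_eq_mul, smul_eq_mul]
    have e1 : Hc (Function.update yv 0 x₁) ≤ g (Function.update yv 0 x₁) :=
      le_csSup (hbdd _) ⟨Hc, hHc, rfl⟩
    have e2 : Hc (Function.update wv 0 x₁) ≤ g (Function.update wv 0 x₁) :=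
      le_csSup (hbdd _) ⟨Hc, hHc, rfl⟩
    exact add_le_add (mul_le_mul_of_nonneg_left e1 ha) (mul_le_mul_of_nonneg_left e2 hb)


end GG

open Fin.NatCast in
theorem statement1 {d : ℕ} (N : ℕ) [NeZero N] (hN : 2 ≤ N)
    (Ω : Set (Ed d)) (hΩopen : IsOpen Ω) (hΩconv : Convex ℝ Ω)
    (hΩbdd : Bornology.IsBounded Ω) (hΩne : Ω.Nonempty)
    (u : ℕ → Ed d → Ed d)
    (hubdd : ∀ ℓ ∈ Icc 1 (N - 1), ∃ C : ℝ, ∀ x ∈ Ω, ‖u ℓ x‖ ≤ C)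
    (hmono : JointlyNMonotone N Ω u) :
    ∃ H : (Fin N → Ed d) → ℝ,
      -- `H` is `N`-sub-antisymmetric
      NSubAntisymmetric N Ω H ∧
      -- `H` vanishes on the diagonal of `Ω^N`
      (∀ x ∈ Ω, H (fun _ => x) = 0) ∧
      -- `H` is concave in the first variable
      (∀ x : Fin N → Ed d, (∀ i, x i ∈ Ω) →
        ConcaveOn ℝ Ω (fun z => H (Function.update x 0 z))) ∧
      -- `H` is jointly convex in the last `N-1` variables
      (∀ x₁ ∈ Ω, ConvexOn ℝ {y : Fin N → Ed d | ∀ i, y i ∈ Ω}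
        (fun y => H (Function.update y 0 x₁))) ∧
      -- the subgradient inequality representing `(u 1, …, u (N-1))`
      (∀ x ∈ Ω, ∀ y : Fin N → Ed d, (∀ i, y i ∈ Ω) →
        ∑ ℓ ∈ Icc 1 (N - 1), ⟪u ℓ x, y (ℓ : Fin N) - x⟫ ≤ H (Function.update y 0 x)) ∧
      -- the `N`-antisymmetry `H + H_{2,…,N} = 0`, where `H_{2,…,N}` is the concavification
      -- in the last `N-1` variables of `K(x) = ∑_{i=1}^{N-1} H(σ^i x)`
      (∀ x : Fin N → Ed d, (∀ i, x i ∈ Ω) →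
        H x + concavify₂N N Ω (fun z => ∑ i ∈ Icc 1 (N - 1), H (cyc^[i] z)) x = 0) := by
  classical
  obtain ⟨m, hblole, hmax⟩ := zorn_le_nonempty₀ {H : (Fin N → Ed d) → ℝ | GG.Good Ω u H}
    (fun c hcsub hc y hy => by
      obtain ⟨g, hg, hub⟩ := GG.chain_ub hΩconv (fun H hH => hcsub hH) hc hy
      exact ⟨g, hg, hub⟩)
    (GG.blo (N := N) Ω u) (GG.good_blo hΩconv hmono)
  have hm : GG.Good Ω u m := hmax.prop
  have hNR : (0 : ℝ) < N := by
    have : 1 ≤ N := Nat.one_le_iff_ne_zero.2 (NeZero.ne N)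
    exact_mod_cast Nat.lt_of_lt_of_le Nat.zero_lt_one this
  set cN : ℝ := (N : ℝ)⁻¹ with hcN
  have hcNpos : 0 < cN := inv_pos.2 hNR
  have hcN0 : 0 ≤ cN := le_of_lt hcNpos
  have hcN1 : cN ≤ 1 := by
    rw [hcN]
    have : (1 : ℝ) ≤ N := by exact_mod_cast Nat.one_le_iff_ne_zero.2 (NeZero.ne N)
    rw [inv_le_one_iff₀]
    right; exact this
  have hcNN : cN * (N : ℝ) = 1 := inv_mul_cancel₀ (ne_of_gt hNR)
  set t : (Fin N → Ed d) → ℝ := fun x => -sSup (GG.SetD Ω m x) with ht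
  have hbounds : ∀ x : Fin N → Ed d, (∀ i, x i ∈ Ω) → m x ≤ t x ∧ t x ≤ -GG.Kf m x :=
    fun x hx => GG.sSup_bounds hm.subanti hm.convlast hx
  set H' : (Fin N → Ed d) → ℝ :=
    Set.indicator {x : Fin N → Ed d | ∀ i, x i ∈ Ω} (fun x => (1 - cN) * m x + cN * t x)
    with hH'
  have hH'S : ∀ x : Fin N → Ed d, (∀ i, x i ∈ Ω) → H' x = (1 - cN) * m x + cN * t x := by
    intro x hx
    have hx' : x ∈ {x : Fin N → Ed d | ∀ i, x i ∈ Ω} := hx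
    exact Set.indicator_of_mem hx' _
  have hgood' : GG.Good Ω u H' := by
    constructor
    · intro x hx
      have hx' : x ∉ {x : Fin N → Ed d | ∀ i, x i ∈ Ω} := hx
      exact Set.indicator_of_notMem hx' _
    · -- ge_base
      intro x hx
      rw [hH'S x hx]
      have h1 := hm.ge_base x hx
      have h2 := (hbounds x hx).1
      have h3 : 0 ≤ cN * (t x - m x) := mul_nonneg hcN0 (by linarith)
      rw [mul_sub] at h3
      nlinarith
    · -- le_ub
      intro x hx
      rw [hH'S x hx]
      have h1 := hm.le_ub x hx
      have h2 := (hbounds x hx).2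
      have h3 : GG.Kf (GG.base u) x ≤ GG.Kf m x :=
        Finset.sum_le_sum fun i _ => hm.ge_base _ (GG.cyc_iter_mem hx i)
      have h4 : t x ≤ -GG.Kf (GG.base u) x := by linarith
      have h5 := mul_le_mul_of_nonneg_left h4 hcN0
      have h6 := mul_le_mul_of_nonneg_left h1 (by linarith : (0:ℝ) ≤ 1 - cN)
      nlinarith
    · -- subanti
      intro x hx
      have hcycS : ∀ i : ℕ, ∀ j, (cyc^[i] x) j ∈ Ω := fun i => GG.cyc_iter_mem hx i
      have e : ∀ i ∈ range N, H' (cyc^[i] x)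
          = (1 - cN) * m (cyc^[i] x) + cN * t (cyc^[i] x) := fun i _ => hH'S _ (hcycS i)
      rw [Finset.sum_congr rfl e, Finset.sum_add_distrib, ← Finset.mul_sum, ← Finset.mul_sum]
      have hS0 : ∑ i ∈ range N, t (cyc^[i] x)
          ≤ -(((N : ℝ) - 1) * ∑ i ∈ range N, m (cyc^[i] x)) := by
        have h1 : ∀ i ∈ range N, t (cyc^[i] x) ≤ -GG.Kf m (cyc^[i] x) :=
          fun i _ => (hbounds _ (hcycS i)).2
        refine (Finset.sum_le_sum h1).trans (le_of_eq ?_)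
        rw [← GG.Kf_cycle_sum m x, ← Finset.sum_neg_distrib]
      have h5 := mul_le_mul_of_nonneg_left hS0 hcN0
      have hzero : (1 - cN) * (∑ i ∈ range N, m (cyc^[i] x))
          + cN * (-(((N : ℝ) - 1) * ∑ i ∈ range N, m (cyc^[i] x)))
          = (1 - cN * (N : ℝ)) * ∑ i ∈ range N, m (cyc^[i] x) := by ring
      rw [hcNN] at hzero
      nlinarith
    · -- diag
      intro z hz
      rw [hH'S _ (fun _ => hz), hm.diag z hz]
      have h1 : t (fun _ : Fin N => z) = 0 := by
        rw [ht]
        dsimp only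
        rw [GG.sSup_diag hm.subanti hm.convlast hm.diag hz, neg_zero]
      rw [h1]
      ring
    · -- convlast
      intro x₁ hx₁
      have h1 : ConvexOn ℝ {y : Fin N → Ed d | ∀ i, y i ∈ Ω}
          (fun y => (1 - cN) • (m (Function.update y 0 x₁))) :=
        (hm.convlast x₁ hx₁).smul (by linarith)
      have h2 : ConvexOn ℝ {y : Fin N → Ed d | ∀ i, y i ∈ Ω}
          (fun y => cN • (-sSup (GG.SetD Ω m (Function.update y 0 x₁)))) :=
        (GG.sSup_convlast hΩconv hm.subanti hm.convlast hx₁).smul hcN0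
      refine GG.convexOn_congr ?_ (h1.add h2)
      intro y hy
      have hyS : ∀ i, Function.update y 0 x₁ i ∈ Ω := GG.update_mem hy hx₁
      rw [hH'S _ hyS]
      show (1 - cN) • m (Function.update y 0 x₁)
          + cN • (-sSup (GG.SetD Ω m (Function.update y 0 x₁))) = _
      rw [smul_eq_mul, smul_eq_mul]
  have hle : m ≤ H' := by
    intro x
    by_cases hx : ∀ i, x i ∈ Ω
    · rw [hH'S x hx]
      have h2 := (hbounds x hx).1
      have h3 : 0 ≤ cN * (t x - m x) := mul_nonneg hcN0 (by linarith)
      rw [mul_sub] at h3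
      nlinarith
    · have hx' : x ∉ {x : Fin N → Ed d | ∀ i, x i ∈ Ω} := hx
      rw [hm.zero_off x hx, hH', Set.indicator_of_notMem hx']
  have heq : H' = m := le_antisymm (hmax.le_of_ge hgood' hle) hle
  have hfix : ∀ x : Fin N → Ed d, (∀ i, x i ∈ Ω) → sSup (GG.SetD Ω m x) = -m x := by
    intro x hx
    have h1 : H' x = m x := by rw [heq]
    rw [hH'S x hx] at h1
    have h2 : cN * t x = cN * m x := by nlinarith
    have h3 : t x = m x := mul_left_cancel₀ (ne_of_gt hcNpos) h2
    have h4 : -sSup (GG.SetD Ω m x) = m x := h3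
    linarith
  refine ⟨m, fun x hx => hm.subanti x hx, hm.diag, ?_, hm.convlast, ?_, ?_⟩
  · -- concavity in the first variable
    intro x hx
    have hcv := GG.sSup_convfirst hΩconv hm.subanti hm.convlast hx
    have hcc : ConcaveOn ℝ Ω (fun z => -sSup (GG.SetD Ω m (Function.update x 0 z))) := hcv.neg
    refine GG.concaveOn_congr ?_ hcc
    intro z hz
    rw [hfix _ (GG.update_mem hx hz)]
    ring
  · -- subgradient inequality
    intro x hx y hy
    have h := hm.ge_base (Function.update y 0 x) (GG.update_mem hy hx)
    refine le_trans (le_of_eq ?_) h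
    rw [GG.base]
    refine Finset.sum_congr rfl fun ℓ hℓ => ?_
    simp only [Finset.mem_Icc] at hℓ
    have hne : ((ℓ : ℕ) : Fin N) ≠ 0 := GG.cast_ne_zero hℓ.1 hℓ.2
    rw [Function.update_self, Function.update_of_ne hne]
  · -- the antisymmetry identity
    intro x hx
    have e : concavify₂N N Ω (fun z => ∑ i ∈ Icc 1 (N - 1), m (cyc^[i] z)) x
        = sSup (GG.SetD Ω m x) := rfl
    rw [e, hfix x hx]
    ring
end
end

section
/- Let N ≥ 2, let Ω be a convex bounded domain in ℝ^d, and let u_1,…,u_{N−1} be bounded vector fields from Ω to ℝ^d whose (N−1)-tuple is jointly N-monotone. Then there exists a continuous N-antisymmetric Hamiltonian H̄ on Ω^N such that for every x ∈ Ω, L_{H̄}(x, u_1(x), u_2(x), …, u_{N−1}(x)) = ∑_{i=1}^{N−1} ⟨u_i(x), x⟩, where L_{H̄}(x,p_1,…,p_{N−1}) = sup{ ∑_{i=1}^{N−1} ⟨p_i, y_i⟩ − H̄(x,y_1,…,y_{N−1}) : y_1,…,y_{N−1} ∈ Ω }. -/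
open MeasureTheory Finset
open scoped BigOperators RealInnerProductSpace

noncomputable section

open Fin.NatCast in
/-- The partial Legendre transform
`L_H(x, p₁,…,p_{N-1}) = sup { ∑_{i=1}^{N-1} ⟨pᵢ, yᵢ⟩ - H(x, y₁,…,y_{N-1}) : yᵢ ∈ Ω }`. -/
def legendreL (N : ℕ) {d : ℕ} [NeZero N] (Ω : Set (Ed d)) (H : (Fin N → Ed d) → ℝ)
    (x : Ed d) (p : ℕ → Ed d) : ℝ :=
  sSup {r : ℝ | ∃ y : Fin N → Ed d, (∀ i, y i ∈ Ω) ∧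
    r = ∑ ℓ ∈ Icc 1 (N - 1), ⟪p ℓ, y (ℓ : Fin N)⟫ - H (Function.update y 0 x)}

open Fin.NatCast

namespace StmtAux

variable {d N : ℕ} [NeZero N]

lemma cyc_apply {α : Type*} (x : Fin N → α) (j : Fin N) : cyc x j = x (j + 1) := by
  rcases N with _ | n
  · exact absurd rfl (NeZero.ne 0)
  · simp [cyc, finRotate_succ_apply]

lemma cyc_iterate {α : Type*} (x : Fin N → α) (i : ℕ) (j : Fin N) :
    cyc^[i] x j = x (j + (i : Fin N)) := by
  induction i generalizing x with
  | zero => simp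
  | succ n ih =>
      rw [Function.iterate_succ_apply, ih, cyc_apply]
      congr 1
      push_cast
      abel

lemma cyc_iterate' {α : Type*} (x : Fin N → α) (i : Fin N) :
    cyc^[i.val] x = fun k => x (k + i) := by
  funext k
  rw [cyc_iterate, Fin.cast_val_eq_self]

lemma cyc_iterate_N {α : Type*} (x : Fin N → α) : cyc^[N] x = x := by
  funext j
  rw [cyc_iterate, Fin.natCast_self, add_zero]

lemma sum_Icc_one_fin (g : Fin N → ℝ) :
    ∑ i ∈ Icc 1 N, g (i : Fin N) = ∑ i : Fin N, g i := by
  have h1 : Icc 1 N = (range N).image (· + 1) := by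
    ext a
    simp only [mem_Icc, mem_image, mem_range]
    constructor
    · rintro ⟨h1, h2⟩; exact ⟨a - 1, by omega, by omega⟩
    · rintro ⟨b, hb, rfl⟩; omega
  rw [h1, Finset.sum_image (by intros a _ b _ h; simp only at h; omega)]
  have h2 : ∀ i : ℕ, g ((i + 1 : ℕ) : Fin N) = (fun j => g (j + 1)) ((i : ℕ) : Fin N) := by
    intro i; simp only; congr 1; push_cast; rfl
  calc ∑ i ∈ range N, g ((i + 1 : ℕ) : Fin N)
      = ∑ i ∈ range N, (fun j => g (j + 1)) ((i : ℕ) : Fin N) := by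
        exact Finset.sum_congr rfl fun i _ => h2 i
    _ = ∑ i : Fin N, g (i + 1) := by
        rw [← Fin.sum_univ_eq_sum_range (fun n => g ((n : Fin N) + 1)) N]
        simp [Fin.cast_val_eq_self]
    _ = ∑ i : Fin N, g i :=
        Fintype.sum_bijective (· + 1) (Equiv.addRight (1 : Fin N)).bijective _ _ fun x => rfl

lemma sum_shift (g : Fin N → ℝ) (c : Fin N) : ∑ i : Fin N, g (i + c) = ∑ i : Fin N, g i :=
  Fintype.sum_bijective (· + c) (Equiv.addRight c).bijective _ _ fun x => rfl

/-- The basic family of affine-ish functions whose sup defines `H̃`. -/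
def fW (u : ℕ → Ed d → Ed d) (K : ℝ) (z : Fin N → Ed d) (w : Ed d) : ℝ :=
  (∑ ℓ ∈ Icc 1 (N - 1), ⟪u ℓ w, z (ℓ : Fin N) - z 0⟫) - K * ‖w - z 0‖

/-- `H̃`. -/
def Ht (u : ℕ → Ed d → Ed d) (K : ℝ) (Ω : Set (Ed d)) (z : Fin N → Ed d) : ℝ :=
  sSup (fW u K z '' Ω)

variable {u : ℕ → Ed d → Ed d} {K C : ℝ} {Ω : Set (Ed d)}

lemma fW_le (hC : ∀ ℓ ∈ Icc 1 (N - 1), ∀ x ∈ Ω, ‖u ℓ x‖ ≤ C) (hK : 0 ≤ K)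
    (z : Fin N → Ed d) {w : Ed d} (hw : w ∈ Ω) :
    fW u K z w ≤ ∑ ℓ ∈ Icc 1 (N - 1), C * ‖z (ℓ : Fin N) - z 0‖ := by
  have h1 : ∀ ℓ ∈ Icc 1 (N - 1), ⟪u ℓ w, z (ℓ : Fin N) - z 0⟫ ≤ C * ‖z (ℓ : Fin N) - z 0‖ := by
    intro ℓ hℓ
    calc ⟪u ℓ w, z (ℓ : Fin N) - z 0⟫ ≤ ‖u ℓ w‖ * ‖z (ℓ : Fin N) - z 0‖ := real_inner_le_norm _ _
      _ ≤ C * ‖z (ℓ : Fin N) - z 0‖ :=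
          mul_le_mul_of_nonneg_right (hC ℓ hℓ w hw) (norm_nonneg _)
  have h2 : 0 ≤ K * ‖w - z 0‖ := mul_nonneg hK (norm_nonneg _)
  calc fW u K z w ≤ ∑ ℓ ∈ Icc 1 (N - 1), ⟪u ℓ w, z (ℓ : Fin N) - z 0⟫ := by
        unfold fW; linarith
    _ ≤ _ := Finset.sum_le_sum h1

lemma bddAbove_fW (hC : ∀ ℓ ∈ Icc 1 (N - 1), ∀ x ∈ Ω, ‖u ℓ x‖ ≤ C) (hK : 0 ≤ K)
    (z : Fin N → Ed d) : BddAbove (fW u K z '' Ω) := by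
  refine ⟨∑ ℓ ∈ Icc 1 (N - 1), C * ‖z (ℓ : Fin N) - z 0‖, ?_⟩
  rintro r ⟨w, hw, rfl⟩
  exact fW_le hC hK z hw

lemma le_Ht (hC : ∀ ℓ ∈ Icc 1 (N - 1), ∀ x ∈ Ω, ‖u ℓ x‖ ≤ C) (hK : 0 ≤ K)
    (z : Fin N → Ed d) {w : Ed d} (hw : w ∈ Ω) : fW u K z w ≤ Ht u K Ω z :=
  le_csSup (bddAbove_fW hC hK z) ⟨w, hw, rfl⟩

lemma Ht_le (hne : Ω.Nonempty) {z : Fin N → Ed d} {b : ℝ}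
    (h : ∀ w ∈ Ω, fW u K z w ≤ b) : Ht u K Ω z ≤ b := by
  refine csSup_le (hne.image _) ?_
  rintro r ⟨w, hw, rfl⟩
  exact h w hw

/-- Uniform Lipschitz-type estimate on `H̃`. -/
lemma Ht_lip (hC : ∀ ℓ ∈ Icc 1 (N - 1), ∀ x ∈ Ω, ‖u ℓ x‖ ≤ C) (hC0 : 0 ≤ C) (hK : 0 ≤ K)
    (hne : Ω.Nonempty) (z z' : Fin N → Ed d) :
    Ht u K Ω z ≤ Ht u K Ω z' + (((N - 1 : ℕ) : ℝ) * (2 * C) + K) * dist z z' := by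
  refine Ht_le hne fun w hw => ?_
  have key : fW u K z w ≤ fW u K z' w + (((N - 1 : ℕ) : ℝ) * (2 * C) + K) * dist z z' := by
    have hdist : ∀ i : Fin N, ‖z i - z' i‖ ≤ dist z z' := by
      intro i
      rw [← dist_eq_norm]
      exact dist_le_pi_dist z z' i
    have hterm : ∀ ℓ ∈ Icc 1 (N - 1),
        ⟪u ℓ w, z (ℓ : Fin N) - z 0⟫ ≤ ⟪u ℓ w, z' (ℓ : Fin N) - z' 0⟫ + 2 * C * dist z z' := by
      intro ℓ hℓ
      have h1 : ⟪u ℓ w, z (ℓ : Fin N) - z 0⟫ - ⟪u ℓ w, z' (ℓ : Fin N) - z' 0⟫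
          = ⟪u ℓ w, (z (ℓ : Fin N) - z' (ℓ : Fin N)) - (z 0 - z' 0)⟫ := by
        rw [← inner_sub_right]
        congr 1
        abel
      have h2 : ⟪u ℓ w, (z (ℓ : Fin N) - z' (ℓ : Fin N)) - (z 0 - z' 0)⟫
          ≤ C * (‖z (ℓ : Fin N) - z' (ℓ : Fin N)‖ + ‖z 0 - z' 0‖) := by
        calc ⟪u ℓ w, (z (ℓ : Fin N) - z' (ℓ : Fin N)) - (z 0 - z' 0)⟫
            ≤ ‖u ℓ w‖ * ‖(z (ℓ : Fin N) - z' (ℓ : Fin N)) - (z 0 - z' 0)‖ :=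
              real_inner_le_norm _ _
          _ ≤ C * (‖z (ℓ : Fin N) - z' (ℓ : Fin N)‖ + ‖z 0 - z' 0‖) := by
              refine mul_le_mul (hC ℓ hℓ w hw) (norm_sub_le _ _) (norm_nonneg _) hC0
      have h3 : ‖z (ℓ : Fin N) - z' (ℓ : Fin N)‖ + ‖z 0 - z' 0‖ ≤ 2 * dist z z' := by
        have := hdist (ℓ : Fin N); have := hdist 0; linarith
      nlinarith [h1, h2, h3, mul_le_mul_of_nonneg_left h3 hC0]
    have hnorm : ‖w - z' 0‖ - ‖w - z 0‖ ≤ dist z z' := by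
      have h4 : ‖w - z' 0‖ - ‖w - z 0‖ ≤ ‖(w - z' 0) - (w - z 0)‖ := norm_sub_norm_le _ _
      have h5 : (w - z' 0) - (w - z 0) = z 0 - z' 0 := by abel
      rw [h5] at h4
      calc ‖w - z' 0‖ - ‖w - z 0‖ ≤ ‖z 0 - z' 0‖ := h4
        _ ≤ dist z z' := by rw [← dist_eq_norm]; exact dist_le_pi_dist z z' 0
    have hsum := Finset.sum_le_sum hterm
    have hcard : ∑ ℓ ∈ Icc 1 (N - 1), (⟪u ℓ w, z' (ℓ : Fin N) - z' 0⟫ + 2 * C * dist z z')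
        = (∑ ℓ ∈ Icc 1 (N - 1), ⟪u ℓ w, z' (ℓ : Fin N) - z' 0⟫)
          + ((N - 1 : ℕ) : ℝ) * (2 * C) * dist z z' := by
      rw [Finset.sum_add_distrib, Finset.sum_const, Nat.card_Icc]
      simp only [Nat.add_sub_cancel, nsmul_eq_mul]
      ring
    have hKd : K * ‖w - z' 0‖ - K * ‖w - z 0‖ ≤ K * dist z z' := by
      rw [← mul_sub]
      exact mul_le_mul_of_nonneg_left hnorm hK
    unfold fW
    rw [hcard] at hsum
    linarith
  calc fW u K z w ≤ fW u K z' w + (((N - 1 : ℕ) : ℝ) * (2 * C) + K) * dist z z' := key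
    _ ≤ Ht u K Ω z' + (((N - 1 : ℕ) : ℝ) * (2 * C) + K) * dist z z' := by
        have := le_Ht hC hK z' hw
        linarith

lemma continuous_Ht (hC : ∀ ℓ ∈ Icc 1 (N - 1), ∀ x ∈ Ω, ‖u ℓ x‖ ≤ C) (hC0 : 0 ≤ C)
    (hK : 0 ≤ K) (hne : Ω.Nonempty) : Continuous (Ht u K Ω (d := d) (N := N)) := by
  have hL0 : 0 ≤ ((N - 1 : ℕ) : ℝ) * (2 * C) + K := by
    have : (0:ℝ) ≤ ((N - 1 : ℕ) : ℝ) := Nat.cast_nonneg _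
    positivity
  have hlip : LipschitzWith (((N - 1 : ℕ) : ℝ) * (2 * C) + K).toNNReal
      (Ht u K Ω (d := d) (N := N)) := by
    refine LipschitzWith.of_dist_le_mul fun z z' => ?_
    rw [Real.dist_eq, Real.coe_toNNReal _ hL0, abs_sub_le_iff]
    constructor
    · have := Ht_lip hC hC0 hK hne z z'; linarith
    · have := Ht_lip hC hC0 hK hne z' z; rw [dist_comm] at this; linarith
  exact hlip.continuous

/-- Joint monotonicity in `Fin N` form. -/
lemma mono_fin (hmono : JointlyNMonotone N Ω u) (w : Fin N → Ed d) (hw : ∀ i, w i ∈ Ω) :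
    0 ≤ ∑ i : Fin N, ∑ ℓ ∈ Icc 1 (N - 1), ⟪u ℓ (w i), w i - w (i + (ℓ : Fin N))⟫ := by
  have h := hmono (fun n => w (n : Fin N)) (fun i _ _ => hw _) ?_
  · have h2 : ∀ i ∈ Icc 1 N, ∑ ℓ ∈ Icc 1 (N - 1), ⟪u ℓ (w (i : Fin N)),
        w (i : Fin N) - w ((i : Fin N) + (ℓ : Fin N))⟫
        = ∑ ℓ ∈ Icc 1 (N - 1), ⟪u ℓ (w ((i : ℕ) : Fin N)),
            w ((i : ℕ) : Fin N) - w (((i + ℓ : ℕ) : Fin N))⟫ := by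
      intro i _
      refine Finset.sum_congr rfl fun ℓ _ => ?_
      congr 2
      push_cast
      ring
    calc (0:ℝ) ≤ ∑ i ∈ Icc 1 N, ∑ ℓ ∈ Icc 1 (N - 1),
          ⟪u ℓ (w ((i : ℕ) : Fin N)), w ((i : ℕ) : Fin N) - w (((i + ℓ : ℕ) : Fin N))⟫ := h
      _ = ∑ i ∈ Icc 1 N, ∑ ℓ ∈ Icc 1 (N - 1), ⟪u ℓ (w (i : Fin N)),
            w (i : Fin N) - w ((i : Fin N) + (ℓ : Fin N))⟫ :=
          (Finset.sum_congr rfl h2).symm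
      _ = ∑ i : Fin N, ∑ ℓ ∈ Icc 1 (N - 1), ⟪u ℓ (w i), w i - w (i + (ℓ : Fin N))⟫ :=
          sum_Icc_one_fin (fun j => ∑ ℓ ∈ Icc 1 (N - 1), ⟪u ℓ (w j), w j - w (j + (ℓ : Fin N))⟫)
  · intro i _ _
    congr 1
    push_cast
    simp [Fin.natCast_self]

/-- The key estimate: the shifted suprema families sum to at most `0`. -/
lemma key_sum (hmono : JointlyNMonotone N Ω u)
    (hC : ∀ ℓ ∈ Icc 1 (N - 1), ∀ x ∈ Ω, ‖u ℓ x‖ ≤ C) (hC0 : 0 ≤ C)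
    (hKge : 2 * C * ((N - 1 : ℕ) : ℝ) ≤ K)
    (z w : Fin N → Ed d) (hz : ∀ i, z i ∈ Ω) (hw : ∀ i, w i ∈ Ω) :
    ∑ i : Fin N, fW u K (fun k => z (k + i)) (w i) ≤ 0 := by
  set D : ℝ := ∑ i : Fin N, ‖z i - w i‖ with hD
  have hD0 : 0 ≤ D := Finset.sum_nonneg fun i _ => norm_nonneg _
  -- rewrite each fW term
  have hfW : ∀ i : Fin N, fW u K (fun k => z (k + i)) (w i)
      = (∑ ℓ ∈ Icc 1 (N - 1), ⟪u ℓ (w i), z ((ℓ : Fin N) + i) - z i⟫) - K * ‖z i - w i‖ := by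
    intro i
    simp only [fW, zero_add]
    rw [norm_sub_rev]
  -- pointwise inner product bound
  have hpt : ∀ i : Fin N, ∀ ℓ ∈ Icc 1 (N - 1),
      ⟪u ℓ (w i), z ((ℓ : Fin N) + i) - z i⟫
        ≤ ⟪u ℓ (w i), w (i + (ℓ : Fin N)) - w i⟫
          + C * ‖z (i + (ℓ : Fin N)) - w (i + (ℓ : Fin N))‖ + C * ‖z i - w i‖ := by
    intro i ℓ hℓ
    have hcomm : (ℓ : Fin N) + i = i + (ℓ : Fin N) := add_comm _ _
    have h1 : ⟪u ℓ (w i), z ((ℓ : Fin N) + i) - z i⟫ - ⟪u ℓ (w i), w (i + (ℓ : Fin N)) - w i⟫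
        = ⟪u ℓ (w i), (z (i + (ℓ : Fin N)) - w (i + (ℓ : Fin N))) - (z i - w i)⟫ := by
      rw [hcomm, ← inner_sub_right]
      congr 1
      abel
    have h2 : ⟪u ℓ (w i), (z (i + (ℓ : Fin N)) - w (i + (ℓ : Fin N))) - (z i - w i)⟫
        ≤ C * (‖z (i + (ℓ : Fin N)) - w (i + (ℓ : Fin N))‖ + ‖z i - w i‖) :=
      calc ⟪u ℓ (w i), (z (i + (ℓ : Fin N)) - w (i + (ℓ : Fin N))) - (z i - w i)⟫
          ≤ ‖u ℓ (w i)‖ * ‖(z (i + (ℓ : Fin N)) - w (i + (ℓ : Fin N))) - (z i - w i)‖ :=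
            real_inner_le_norm _ _
        _ ≤ C * (‖z (i + (ℓ : Fin N)) - w (i + (ℓ : Fin N))‖ + ‖z i - w i‖) :=
            mul_le_mul (hC ℓ hℓ _ (hw i)) (norm_sub_le _ _) (norm_nonneg _) hC0
    linarith [h1, h2]
  -- the monotone part
  have hmonoF := mono_fin hmono w hw
  have hmono2 : ∑ i : Fin N, ∑ ℓ ∈ Icc 1 (N - 1), ⟪u ℓ (w i), w (i + (ℓ : Fin N)) - w i⟫ ≤ 0 := by
    have : ∀ i : Fin N, ∀ ℓ ∈ Icc 1 (N - 1),
        ⟪u ℓ (w i), w (i + (ℓ : Fin N)) - w i⟫ = -⟪u ℓ (w i), w i - w (i + (ℓ : Fin N))⟫ := by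
      intro i ℓ _
      rw [← inner_neg_right]
      congr 1
      abel
    calc ∑ i : Fin N, ∑ ℓ ∈ Icc 1 (N - 1), ⟪u ℓ (w i), w (i + (ℓ : Fin N)) - w i⟫
        = ∑ i : Fin N, ∑ ℓ ∈ Icc 1 (N - 1), -⟪u ℓ (w i), w i - w (i + (ℓ : Fin N))⟫ :=
          Finset.sum_congr rfl fun i _ => Finset.sum_congr rfl fun ℓ hℓ => this i ℓ hℓ
      _ = -∑ i : Fin N, ∑ ℓ ∈ Icc 1 (N - 1), ⟪u ℓ (w i), w i - w (i + (ℓ : Fin N))⟫ := by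
          simp [Finset.sum_neg_distrib]
      _ ≤ 0 := by linarith [hmonoF]
  -- sum of the error terms
  have herr1 : ∑ i : Fin N, ∑ ℓ ∈ Icc 1 (N - 1),
      C * ‖z (i + (ℓ : Fin N)) - w (i + (ℓ : Fin N))‖ = C * ((N - 1 : ℕ) : ℝ) * D := by
    rw [Finset.sum_comm]
    have : ∀ ℓ ∈ Icc 1 (N - 1),
        ∑ i : Fin N, C * ‖z (i + (ℓ : Fin N)) - w (i + (ℓ : Fin N))‖ = C * D := by
      intro ℓ _
      rw [← Finset.mul_sum]
      congr 1
      exact sum_shift (fun j => ‖z j - w j‖) (ℓ : Fin N)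
    rw [Finset.sum_congr rfl this, Finset.sum_const, Nat.card_Icc]
    simp only [Nat.add_sub_cancel, nsmul_eq_mul]
    ring
  have herr2 : ∑ i : Fin N, ∑ ℓ ∈ Icc 1 (N - 1), C * ‖z i - w i‖
      = C * ((N - 1 : ℕ) : ℝ) * D := by
    have : ∀ i : Fin N, ∑ ℓ ∈ Icc 1 (N - 1), C * ‖z i - w i‖
        = ((N - 1 : ℕ) : ℝ) * (C * ‖z i - w i‖) := by
      intro i
      rw [Finset.sum_const, Nat.card_Icc]
      simp only [Nat.add_sub_cancel, nsmul_eq_mul]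
    rw [Finset.sum_congr rfl fun i _ => this i, hD, Finset.mul_sum]
    exact Finset.sum_congr rfl fun i _ => by ring
  -- combine
  have hsum : ∑ i : Fin N, ∑ ℓ ∈ Icc 1 (N - 1), ⟪u ℓ (w i), z ((ℓ : Fin N) + i) - z i⟫
      ≤ 2 * C * ((N - 1 : ℕ) : ℝ) * D := by
    have step : ∑ i : Fin N, ∑ ℓ ∈ Icc 1 (N - 1), ⟪u ℓ (w i), z ((ℓ : Fin N) + i) - z i⟫
        ≤ ∑ i : Fin N, ∑ ℓ ∈ Icc 1 (N - 1), (⟪u ℓ (w i), w (i + (ℓ : Fin N)) - w i⟫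
          + C * ‖z (i + (ℓ : Fin N)) - w (i + (ℓ : Fin N))‖ + C * ‖z i - w i‖) :=
      Finset.sum_le_sum fun i _ => Finset.sum_le_sum fun ℓ hℓ => hpt i ℓ hℓ
    have expand : ∑ i : Fin N, ∑ ℓ ∈ Icc 1 (N - 1), (⟪u ℓ (w i), w (i + (ℓ : Fin N)) - w i⟫
          + C * ‖z (i + (ℓ : Fin N)) - w (i + (ℓ : Fin N))‖ + C * ‖z i - w i‖)
        = (∑ i : Fin N, ∑ ℓ ∈ Icc 1 (N - 1), ⟪u ℓ (w i), w (i + (ℓ : Fin N)) - w i⟫)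
          + (∑ i : Fin N, ∑ ℓ ∈ Icc 1 (N - 1), C * ‖z (i + (ℓ : Fin N)) - w (i + (ℓ : Fin N))‖)
          + (∑ i : Fin N, ∑ ℓ ∈ Icc 1 (N - 1), C * ‖z i - w i‖) := by
      rw [← Finset.sum_add_distrib, ← Finset.sum_add_distrib]
      exact Finset.sum_congr rfl fun i _ => by rw [← Finset.sum_add_distrib,
        ← Finset.sum_add_distrib]
    rw [expand, herr1, herr2] at step
    linarith [hmono2]
  -- final assembly
  have final : ∑ i : Fin N, fW u K (fun k => z (k + i)) (w i)
      = (∑ i : Fin N, ∑ ℓ ∈ Icc 1 (N - 1), ⟪u ℓ (w i), z ((ℓ : Fin N) + i) - z i⟫) - K * D := by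
    rw [Finset.sum_congr rfl fun i _ => hfW i, Finset.sum_sub_distrib, ← Finset.mul_sum]
  rw [final]
  have hKD : 2 * C * ((N - 1 : ℕ) : ℝ) * D ≤ K * D := mul_le_mul_of_nonneg_right hKge hD0
  linarith

/-- Sub-antisymmetry of `H̃` on `Ω^N`. -/
lemma subantisym (hmono : JointlyNMonotone N Ω u)
    (hC : ∀ ℓ ∈ Icc 1 (N - 1), ∀ x ∈ Ω, ‖u ℓ x‖ ≤ C) (hC0 : 0 ≤ C) (hK0 : 0 ≤ K)
    (hKge : 2 * C * ((N - 1 : ℕ) : ℝ) ≤ K) (hne : Ω.Nonempty)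
    (z : Fin N → Ed d) (hz : ∀ i, z i ∈ Ω) :
    ∑ i ∈ range N, Ht u K Ω (cyc^[i] z) ≤ 0 := by
  have hNpos : 0 < (N : ℝ) := by
    have := Nat.pos_of_ne_zero (NeZero.ne N)
    exact_mod_cast this
  have hconv : ∑ i ∈ range N, Ht u K Ω (cyc^[i] z)
      = ∑ i : Fin N, Ht u K Ω (fun k => z (k + i)) := by
    rw [← Fin.sum_univ_eq_sum_range (fun n => Ht u K Ω (cyc^[n] z)) N]
    exact Finset.sum_congr rfl fun i _ => by rw [cyc_iterate' z i]
  rw [hconv]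
  have hbound : ∀ ε : ℝ, 0 < ε → ∑ i : Fin N, Ht u K Ω (fun k => z (k + i)) ≤ ε := by
    intro ε hε
    have hchoice : ∀ i : Fin N, ∃ wi, wi ∈ Ω ∧
        Ht u K Ω (fun k => z (k + i)) ≤ fW u K (fun k => z (k + i)) wi + ε / N := by
      intro i
      have hne' : (fW u K (fun k => z (k + i)) '' Ω).Nonempty := hne.image _
      have hεN : 0 < ε / N := div_pos hε hNpos
      have hlt : Ht u K Ω (fun k => z (k + i)) - ε / N
          < sSup (fW u K (fun k => z (k + i)) '' Ω) := by
        unfold Ht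
        linarith
      obtain ⟨r, hr, hgt⟩ := exists_lt_of_lt_csSup hne' hlt
      obtain ⟨wi, hwi, rfl⟩ := hr
      exact ⟨wi, hwi, by linarith⟩
    choose w hwΩ hwle using hchoice
    have hkey := key_sum hmono hC hC0 hKge z w hz hwΩ
    have hstep : ∑ i : Fin N, Ht u K Ω (fun k => z (k + i))
        ≤ ∑ i : Fin N, (fW u K (fun k => z (k + i)) (w i) + ε / N) :=
      Finset.sum_le_sum fun i _ => hwle i
    have hsplit : ∑ i : Fin N, (fW u K (fun k => z (k + i)) (w i) + ε / N)
        = (∑ i : Fin N, fW u K (fun k => z (k + i)) (w i)) + (N : ℝ) * (ε / N) := by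
      rw [Finset.sum_add_distrib, Finset.sum_const, card_univ, Fintype.card_fin, nsmul_eq_mul]
    have hNε : (N : ℝ) * (ε / N) = ε := by field_simp
    rw [hsplit, hNε] at hstep
    linarith
  by_contra hcon
  push_neg at hcon
  have := hbound (((∑ i : Fin N, Ht u K Ω (fun k => z (k + i))) / 2)) (by linarith)
  linarith

/-- The cyclic average of `H̃`. -/
def Afun (u : ℕ → Ed d → Ed d) (K : ℝ) (Ω : Set (Ed d)) (z : Fin N → Ed d) : ℝ :=
  (N : ℝ)⁻¹ * ∑ i ∈ range N, Ht u K Ω (cyc^[i] z)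

lemma sum_Ht_cyc (z : Fin N → Ed d) :
    ∑ i ∈ range N, Ht u K Ω (cyc^[i] (cyc z)) = ∑ i ∈ range N, Ht u K Ω (cyc^[i] z) := by
  have h1 : ∀ i : ℕ, cyc^[i] (cyc z) = cyc^[i + 1] z := fun i =>
    (Function.iterate_succ_apply cyc i z).symm
  have h2 := Finset.sum_range_succ (fun i => Ht u K Ω (cyc^[i] z)) N
  have h3 := Finset.sum_range_succ' (fun i => Ht u K Ω (cyc^[i] z)) N
  have h4 : Ht u K Ω (cyc^[N] z) = Ht u K Ω (cyc^[0] z) := by rw [cyc_iterate_N]; rfl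
  calc ∑ i ∈ range N, Ht u K Ω (cyc^[i] (cyc z))
      = ∑ i ∈ range N, Ht u K Ω (cyc^[i + 1] z) :=
        Finset.sum_congr rfl fun i _ => by rw [h1]
    _ = ∑ i ∈ range N, Ht u K Ω (cyc^[i] z) := by
        rw [h3] at h2
        have h5 : Ht u K Ω (cyc^[0] z) = Ht u K Ω z := rfl
        linarith [h2, h4]

lemma Afun_cyc_iter (z : Fin N → Ed d) (j : ℕ) :
    Afun u K Ω (cyc^[j] z) = Afun u K Ω z := by
  induction j generalizing z with
  | zero => rfl
  | succ n ih =>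
      rw [Function.iterate_succ_apply, ih (cyc z)]
      unfold Afun
      rw [sum_Ht_cyc]

end StmtAux

theorem statement2 {d : ℕ} (N : ℕ) [NeZero N] (hN : 2 ≤ N)
    (Ω : Set (Ed d)) (hΩopen : IsOpen Ω) (hΩconv : Convex ℝ Ω)
    (hΩbdd : Bornology.IsBounded Ω) (hΩne : Ω.Nonempty)
    (u : ℕ → Ed d → Ed d)
    (hubdd : ∀ ℓ ∈ Icc 1 (N - 1), ∃ C : ℝ, ∀ x ∈ Ω, ‖u ℓ x‖ ≤ C)
    (hmono : JointlyNMonotone N Ω u) :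
    ∃ H : (Fin N → Ed d) → ℝ,
      -- `H` is continuous on `Ω^N`
      ContinuousOn H {y : Fin N → Ed d | ∀ i, y i ∈ Ω} ∧
      -- `H` is `N`-antisymmetric on `Ω^N`
      NAntisymmetric N Ω H ∧
      -- `L_H(x, u₁(x),…,u_{N-1}(x)) = ∑_{i=1}^{N-1} ⟨uᵢ(x), x⟩` for all `x ∈ Ω`
      (∀ x ∈ Ω, legendreL N Ω H x (fun ℓ => u ℓ x) = ∑ ℓ ∈ Icc 1 (N - 1), ⟪u ℓ x, x⟫) := by
  classical
  have h1 : ∀ ℓ : ℕ, ∃ c : ℝ, 0 ≤ c ∧ (ℓ ∈ Icc 1 (N - 1) → ∀ x ∈ Ω, ‖u ℓ x‖ ≤ c) := by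
    intro ℓ
    by_cases h : ℓ ∈ Icc 1 (N - 1)
    · obtain ⟨c, hc⟩ := hubdd ℓ h
      exact ⟨max c 0, le_max_right _ _, fun _ x hx => (hc x hx).trans (le_max_left _ _)⟩
    · exact ⟨0, le_rfl, fun h' => absurd h' h⟩
  choose c hc0 hcb using h1
  set C : ℝ := ∑ ℓ ∈ Icc 1 (N - 1), c ℓ with hCdef
  have hC0 : 0 ≤ C := Finset.sum_nonneg fun ℓ _ => hc0 ℓ
  have hC : ∀ ℓ ∈ Icc 1 (N - 1), ∀ x ∈ Ω, ‖u ℓ x‖ ≤ C := fun ℓ hℓ x hx =>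
    (hcb ℓ hℓ x hx).trans (Finset.single_le_sum (fun j _ => hc0 j) hℓ)
  set K : ℝ := 2 * C * ((N - 1 : ℕ) : ℝ) with hKdef
  have hK0 : 0 ≤ K := by
    have : (0:ℝ) ≤ ((N - 1 : ℕ) : ℝ) := Nat.cast_nonneg _
    positivity
  have hKge : 2 * C * ((N - 1 : ℕ) : ℝ) ≤ K := le_of_eq hKdef.symm
  have hNpos : (0:ℝ) < (N : ℝ) := by
    have := Nat.pos_of_ne_zero (NeZero.ne N)
    exact_mod_cast this
  have hNne : (N : ℝ) ≠ 0 := ne_of_gt hNpos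
  refine ⟨fun z => StmtAux.Ht u K Ω z - StmtAux.Afun u K Ω z, ?_, ?_, ?_⟩
  · -- continuity
    have hcont := StmtAux.continuous_Ht hC hC0 hK0 hΩne
    have hcyccont : ∀ i : ℕ, Continuous (fun z : Fin N → Ed d => cyc^[i] z) := by
      intro i
      have heq : (fun z : Fin N → Ed d => cyc^[i] z)
          = fun z => (fun k => z (k + (i : Fin N))) :=
        funext fun z => funext fun k => StmtAux.cyc_iterate z i k
      rw [heq]
      exact continuous_pi fun k => continuous_apply _
    have hAcont : Continuous (StmtAux.Afun u K Ω (d := d) (N := N)) := by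
      unfold StmtAux.Afun
      exact continuous_const.mul (continuous_finset_sum _ fun i _ => hcont.comp (hcyccont i))
    exact (hcont.sub hAcont).continuousOn
  · -- antisymmetry
    intro x _
    have h1 : ∑ i ∈ range N, (StmtAux.Ht u K Ω (cyc^[i] x) - StmtAux.Afun u K Ω (cyc^[i] x))
        = (∑ i ∈ range N, StmtAux.Ht u K Ω (cyc^[i] x))
          - ∑ i ∈ range N, StmtAux.Afun u K Ω (cyc^[i] x) := Finset.sum_sub_distrib _ _
    have h2 : ∑ i ∈ range N, StmtAux.Afun u K Ω (cyc^[i] x)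
        = ∑ i ∈ range N, StmtAux.Afun u K Ω x :=
      Finset.sum_congr rfl fun i _ => StmtAux.Afun_cyc_iter x i
    show ∑ i ∈ range N, (StmtAux.Ht u K Ω (cyc^[i] x) - StmtAux.Afun u K Ω (cyc^[i] x)) = 0
    rw [h1, h2, Finset.sum_const, card_range, nsmul_eq_mul]
    unfold StmtAux.Afun
    field_simp
    ring
  · -- Legendre identity
    intro x hx
    set T : ℝ := ∑ ℓ ∈ Icc 1 (N - 1), ⟪u ℓ x, x⟫ with hT
    have hfin : ∀ ℓ ∈ Icc 1 (N - 1), ((ℓ : ℕ) : Fin N) ≠ 0 := by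
      intro ℓ hℓ
      have hm := mem_Icc.mp hℓ
      have hℓN : ℓ < N := by omega
      simp only [ne_eq, Fin.ext_iff, Fin.val_natCast, Nat.mod_eq_of_lt hℓN, Fin.val_zero]
      omega
    have hdiag0 : StmtAux.Ht u K Ω (fun _ : Fin N => x)
        - StmtAux.Afun u K Ω (fun _ : Fin N => x) = 0 := by
      have hfix : cyc (fun _ : Fin N => x) = fun _ : Fin N => x :=
        funext fun j => by rw [StmtAux.cyc_apply]
      have hiter : ∀ i : ℕ, cyc^[i] (fun _ : Fin N => x) = fun _ : Fin N => x := fun i =>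
        Function.iterate_fixed hfix i
      unfold StmtAux.Afun
      rw [Finset.sum_congr rfl fun i _ => by rw [hiter i], Finset.sum_const, card_range,
        nsmul_eq_mul]
      field_simp
      ring
    have hupdiag : Function.update (fun _ : Fin N => x) 0 x = fun _ : Fin N => x :=
      Function.update_eq_self 0 _
    have hmem : ∃ y : Fin N → Ed d, (∀ i, y i ∈ Ω) ∧
        T = ∑ ℓ ∈ Icc 1 (N - 1), ⟪u ℓ x, y (ℓ : Fin N)⟫
          - (StmtAux.Ht u K Ω (Function.update y 0 x)
            - StmtAux.Afun u K Ω (Function.update y 0 x)) := by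
      refine ⟨fun _ => x, fun _ => hx, ?_⟩
      rw [hupdiag, hdiag0, hT, sub_zero]
    have hub : ∀ r : ℝ, (∃ y : Fin N → Ed d, (∀ i, y i ∈ Ω) ∧
        r = ∑ ℓ ∈ Icc 1 (N - 1), ⟪u ℓ x, y (ℓ : Fin N)⟫
          - (StmtAux.Ht u K Ω (Function.update y 0 x)
            - StmtAux.Afun u K Ω (Function.update y 0 x))) → r ≤ T := by
      rintro r ⟨y, hy, rfl⟩
      have hz : ∀ i, Function.update y 0 x i ∈ Ω := by
        intro i
        rcases eq_or_ne i 0 with rfl | h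
        · rw [Function.update_self]; exact hx
        · rw [Function.update_of_ne h]; exact hy i
      have hz0 : Function.update y 0 x 0 = x := Function.update_self _ _ _
      have hA : StmtAux.Afun u K Ω (Function.update y 0 x) ≤ 0 := by
        have hs := StmtAux.subantisym hmono hC hC0 hK0 hKge hΩne _ hz
        unfold StmtAux.Afun
        exact mul_nonpos_of_nonneg_of_nonpos (inv_nonneg.mpr (le_of_lt hNpos)) hs
      have hHt : StmtAux.fW u K (Function.update y 0 x) x
          ≤ StmtAux.Ht u K Ω (Function.update y 0 x) := StmtAux.le_Ht hC hK0 _ hx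
      have hfval : StmtAux.fW u K (Function.update y 0 x) x
          = ∑ ℓ ∈ Icc 1 (N - 1), ⟪u ℓ x, Function.update y 0 x (ℓ : Fin N) - x⟫ := by
        simp [StmtAux.fW, hz0]
      have e1 : ∑ ℓ ∈ Icc 1 (N - 1), ⟪u ℓ x, y (ℓ : Fin N)⟫
          = ∑ ℓ ∈ Icc 1 (N - 1), ⟪u ℓ x, Function.update y 0 x (ℓ : Fin N)⟫ :=
        Finset.sum_congr rfl fun ℓ hℓ => by rw [Function.update_of_ne (hfin ℓ hℓ)]
      have e2 : (∑ ℓ ∈ Icc 1 (N - 1), ⟪u ℓ x, Function.update y 0 x (ℓ : Fin N)⟫)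
          - StmtAux.fW u K (Function.update y 0 x) x = T := by
        rw [hfval, ← Finset.sum_sub_distrib, hT]
        refine Finset.sum_congr rfl fun ℓ _ => ?_
        rw [inner_sub_right]
        ring
      linarith [hHt, hA, e1, e2]
    unfold legendreL
    refine le_antisymm (csSup_le ⟨T, hmem⟩ fun r hr => hub r hr) (le_csSup ⟨T, ?_⟩ hmem)
    exact fun r hr => hub r hr
end
end

section
/- Let N ≥ 2, let Ω be a convex bounded domain in ℝ^d, and let u_1,…,u_{N−1} : Ω → ℝ^d. Suppose H : Ω^N → ℝ is N-sub-antisymmetric, vanishes on the diagonal (H(x,…,x)=0 for all x ∈ Ω), and satisfies: for every x ∈ Ω and every (y_1,…,y_{N−1}) ∈ Ω^{N−1}, H(x,y_1,…,y_{N−1}) ≥ ∑_{ℓ=1}^{N−1} ⟨u_ℓ(x), y_ℓ − x⟩. Then the (N−1)-tuple (u_1,…,u_{N−1}) is jointly N-monotone on Ω. -/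
open MeasureTheory Finset
open scoped BigOperators RealInnerProductSpace

noncomputable section

open Fin.NatCast

lemma cyc_iterate {N : ℕ} [NeZero N] {α : Type*} (x : Fin N → α) (k : ℕ) (j : Fin N) :
    cyc^[k] x j = x (j + (k : Fin N)) := by
  induction k generalizing x j with
  | zero => simp
  | succ k ih =>
    rw [Function.iterate_succ_apply, ih]
    obtain ⟨M, rfl⟩ : ∃ M, N = M + 1 :=
      ⟨N - 1, (Nat.succ_pred_eq_of_pos (Nat.pos_of_ne_zero (NeZero.ne _))).symm⟩
    simp only [cyc, Function.comp_apply, finRotate_succ_apply]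
    congr 1
    rw [add_assoc]
    exact congrArg _ (Nat.cast_succ k).symm

theorem statement3 {d : ℕ} (N : ℕ) [NeZero N] (hN : 2 ≤ N)
    (Ω : Set (Ed d)) (hΩopen : IsOpen Ω) (hΩconv : Convex ℝ Ω)
    (hΩbdd : Bornology.IsBounded Ω) (hΩne : Ω.Nonempty)
    (u : ℕ → Ed d → Ed d)
    (H : (Fin N → Ed d) → ℝ)
    -- `H` is `N`-sub-antisymmetric
    (hsub : NSubAntisymmetric N Ω H)
    -- `H` vanishes on the diagonal
    (hdiag : ∀ x ∈ Ω, H (fun _ => x) = 0)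
    -- the subgradient inequality
    (hsubgrad : ∀ x ∈ Ω, ∀ y : Fin N → Ed d, (∀ i, y i ∈ Ω) →
      ∑ ℓ ∈ Icc 1 (N - 1), ⟪u ℓ x, y (Fin.ofNat N ℓ) - x⟫ ≤ H (Function.update y 0 x)) :
    JointlyNMonotone N Ω u := by
  intro x hmem hper
  set w : ℕ → Fin N → Ed d := fun i j => x (i + j.val) with hw
  have hwmem : ∀ i, 1 ≤ i → i ≤ N → ∀ j : Fin N, w i j ∈ Ω := by
    intro i h1 h2 j
    apply hmem
    · omega
    · have := j.isLt; omega
  -- step 1: subgradient inequality for each i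
  have hstep : ∀ i ∈ Icc 1 N,
      ∑ ℓ ∈ Icc 1 (N - 1), ⟪u ℓ (x i), x (i + ℓ) - x i⟫ ≤ H (w i) := by
    intro i hi
    rw [mem_Icc] at hi
    have hxi : x i ∈ Ω := hmem i hi.1 (by omega)
    have h := hsubgrad (x i) hxi (w i) (hwmem i hi.1 hi.2)
    have hupd : Function.update (w i) 0 (x i) = w i := by
      have h0 : w i 0 = x i := by simp [hw]
      rw [← h0, Function.update_eq_self]
    rw [hupd] at h
    refine le_trans (le_of_eq ?_) h
    apply Finset.sum_congr rfl
    intro ℓ hℓ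
    rw [mem_Icc] at hℓ
    have hv : ((Fin.ofNat N ℓ : Fin N) : ℕ) = ℓ := by
      rw [Fin.val_ofNat]
      exact Nat.mod_eq_of_lt (by omega)
    congr 2
    simp [hw, Nat.mod_eq_of_lt (show ℓ < N by omega)]
  -- step 2: `w (1+k)` is the `k`-th cyclic image of `w 1`
  have hcyc : ∀ k, k < N → cyc^[k] (w 1) = w (1 + k) := by
    intro k hk
    funext j
    rw [cyc_iterate]
    simp only [hw]
    have hkv : ((k : Fin N) : ℕ) = k := by
      rw [Fin.val_natCast]; exact Nat.mod_eq_of_lt hk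
    have hval : ((j + (k : Fin N)) : Fin N).val = (j.val + k) % N := by
      rw [Fin.add_def, hkv]
    rw [hval]
    rcases Nat.lt_or_ge (j.val + k) N with h | h
    · rw [Nat.mod_eq_of_lt h]
      have e : 1 + ((j : ℕ) + k) = 1 + k + (j : ℕ) := by omega
      rw [e]
    · have hj := j.isLt
      have hmod : (j.val + k) % N = j.val + k - N := by
        rw [Nat.mod_eq_sub_mod h, Nat.mod_eq_of_lt (by omega)]
      rw [hmod]
      have hp := hper (1 + (j.val + k) - N) (by omega) (by omega)
      calc x (1 + ((j : ℕ) + k - N)) = x (1 + ((j : ℕ) + k) - N) := by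
              have e : 1 + ((j : ℕ) + k - N) = 1 + ((j : ℕ) + k) - N := by omega
              rw [e]
        _ = x (N + (1 + ((j : ℕ) + k) - N)) := hp.symm
        _ = x (1 + ((j : ℕ) + k)) := by
              have e : N + (1 + ((j : ℕ) + k) - N) = 1 + ((j : ℕ) + k) := by omega
              rw [e]
        _ = x (1 + k + (j : ℕ)) := by
              have e : 1 + ((j : ℕ) + k) = 1 + k + (j : ℕ) := by omega
              rw [e]
  -- step 3: sum of H over the cycle is ≤ 0
  have hsum : ∑ i ∈ Icc 1 N, H (w i) ≤ 0 := by
    have h := hsub (w 1) (hwmem 1 le_rfl (by omega))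
    have heq : ∑ i ∈ Icc 1 N, H (w i) = ∑ k ∈ range N, H (cyc^[k] (w 1)) := by
      rw [← Finset.Ico_add_one_right_eq_Icc, Finset.sum_Ico_eq_sum_range]
      simp only [Nat.add_sub_cancel]
      exact Finset.sum_congr rfl fun k hk => by
        rw [hcyc k (Finset.mem_range.mp hk)]
    rw [heq]; exact h
  -- combine
  have hS : ∑ i ∈ Icc 1 N, ∑ ℓ ∈ Icc 1 (N - 1), ⟪u ℓ (x i), x (i + ℓ) - x i⟫ ≤ 0 :=
    le_trans (Finset.sum_le_sum hstep) hsum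
  have hneg : ∑ i ∈ Icc 1 N, ∑ ℓ ∈ Icc 1 (N - 1), ⟪u ℓ (x i), x i - x (i + ℓ)⟫
      = - ∑ i ∈ Icc 1 N, ∑ ℓ ∈ Icc 1 (N - 1), ⟪u ℓ (x i), x (i + ℓ) - x i⟫ := by
    rw [← Finset.sum_neg_distrib]
    refine Finset.sum_congr rfl fun i _ => ?_
    rw [← Finset.sum_neg_distrib]
    refine Finset.sum_congr rfl fun ℓ _ => ?_
    rw [← inner_neg_right, neg_sub]
  rw [hneg]
  linarith
end
end
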